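/- arXiv:2107.05156 — 7 statements merged into one kernel-verified Lean document; each statement's English description precedes it below -/
import Mathlib

section
/- Let p be a primitive polynomial of degree k ≥ 1 over 𝔽₂, let c be the m-sequence generated by p from any nonzero initial state, and let n ≥ k. Then the set W = {(c_j, c_{j+1}, …, c_{j+n−1}) : j ∈ ℕ} ∪ {(0,…,0)} of length-n windows of c together with the zero vector equals the set S = {v ∈ 𝔽₂^n : Σ_{i=0}^{k} p_i v_{m−i} = 0 for all k ≤ m ≤ n−1} of all length-n solutions of the recurrence; in particular, W is an 𝔽₂-linear subspace of 𝔽₂^n of dimension k (so |W| = 2^k). -/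
/-- A polynomial `p` over 𝔽₂ is primitive of degree `k` if it is irreducible of degree `k`
and the residue class of `X` in `𝔽₂[x]/(p)` has multiplicative order `2^k - 1`. -/
def IsPrimitivePoly (k : ℕ) (p : Polynomial (ZMod 2)) : Prop :=
  p.natDegree = k ∧ Irreducible p ∧ orderOf (AdjoinRoot.root p) = 2 ^ k - 1

/-- The PR code `C(p, n)`: vectors `v ∈ 𝔽₂ⁿ` with `∑_{i=0}^{k} p_i v_{m-i} = 0`
for all `k ≤ m ≤ n - 1`. -/
def PRCode (k n : ℕ) (p : Polynomial (ZMod 2)) : Set (Fin n → ZMod 2) :=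
  {v | ∀ m : Fin n, k ≤ (m : ℕ) →
    ∑ i ∈ Finset.range (k + 1),
      p.coeff i * v ⟨(m : ℕ) - i, lt_of_le_of_lt (Nat.sub_le _ _) m.isLt⟩ = 0}



namespace S0
open Finset Polynomial


/-- Peel off the `i = 0` term of the recurrence when `p.coeff 0 = 1`. -/
lemma step {k : ℕ} {p : Polynomial (ZMod 2)} (h0 : p.coeff 0 = 1)
    {s : ℕ → ZMod 2} {m : ℕ}
    (h : ∑ i ∈ Finset.range (k + 1), p.coeff i * s (m - i) = 0) :
    s m = ∑ i ∈ Finset.range k, p.coeff (i + 1) * s (m - (i + 1)) := by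
  rw [Finset.sum_range_succ'] at h
  simp only [h0, Nat.sub_zero, one_mul] at h
  have h2 : (2 : ZMod 2) = 0 := rfl
  linear_combination h - (∑ i ∈ Finset.range k, p.coeff (i + 1) * s (m - (i + 1))) * h2

/-- Conversely, reassemble the recurrence. -/
lemma unstep {k : ℕ} {p : Polynomial (ZMod 2)} (h0 : p.coeff 0 = 1)
    {s : ℕ → ZMod 2} {m : ℕ}
    (h : s m = ∑ i ∈ Finset.range k, p.coeff (i + 1) * s (m - (i + 1))) :
    ∑ i ∈ Finset.range (k + 1), p.coeff i * s (m - i) = 0 := by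
  rw [Finset.sum_range_succ']
  simp only [h0, Nat.sub_zero, one_mul]
  rw [← h]
  exact CharTwo.add_self_eq_zero _

/-- Uniqueness: two (bounded) solutions agreeing on the first `k` values agree up to `N`. -/
lemma uniq {k : ℕ} {p : Polynomial (ZMod 2)} (hk : 1 ≤ k) (h0 : p.coeff 0 = 1)
    {N : ℕ} {s t : ℕ → ZMod 2}
    (hs : ∀ m, k ≤ m → m < N → ∑ i ∈ Finset.range (k + 1), p.coeff i * s (m - i) = 0)
    (ht : ∀ m, k ≤ m → m < N → ∑ i ∈ Finset.range (k + 1), p.coeff i * t (m - i) = 0)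
    (hag : ∀ i, i < k → s i = t i) : ∀ m, m < N → s m = t m := by

  intro m
  induction m using Nat.strong_induction_on with
  | _ m ih =>
    intro hmN
    by_cases hmk : m < k
    · exact hag m hmk
    · push_neg at hmk
      rw [step h0 (hs m hmk hmN), step h0 (ht m hmk hmN)]
      refine Finset.sum_congr rfl fun i hi => ?_
      rw [ih (m - (i + 1)) (by omega) (by omega)]

/-- If a full solution has a zero state window at `j`, its initial state is zero. -/
lemma state_zero {k : ℕ} {p : Polynomial (ZMod 2)} (hk : 1 ≤ k) (hpk : p.coeff k = 1)
    {s : ℕ → ZMod 2}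
    (hs : ∀ m, k ≤ m → ∑ i ∈ Finset.range (k + 1), p.coeff i * s (m - i) = 0) :
    ∀ j, (∀ i, i < k → s (j + i) = 0) → ∀ i, i < k → s i = 0 := by
  intro j
  induction j with
  | zero => intro h i hi; simpa using h i hi
  | succ j ih =>
    intro h
    refine ih fun i hi => ?_
    rcases Nat.eq_zero_or_pos i with rfl | hipos
    · -- use the recurrence at m = j + k, solved for s (m - k) = s j
      have hrec := hs (j + k) (by omega)
      rw [Finset.sum_range_succ] at hrec
      have hz : ∀ i, i < k → s (j + k - i) = 0 := by
        intro i hik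
        have : j + k - i = (j + 1) + (k - 1 - i) := by omega
        rw [this]
        exact h _ (by omega)
      rw [Finset.sum_eq_zero (fun i hik => by
        rw [hz i (Finset.mem_range.mp hik), mul_zero])] at hrec
      have : j + k - k = j := by omega
      rw [this, hpk, one_mul, zero_add] at hrec
      simpa using hrec
    · have : j + i = (j + 1) + (i - 1) := by omega
      rw [this]
      exact h _ (by omega)



variable (k : ℕ) (p : Polynomial (ZMod 2))

/-- Extend a `Fin k` vector by zero. -/
def Wf (w : Fin k → ZMod 2) : ℕ → ZMod 2 := fun j => if h : j < k then w ⟨j, h⟩ else 0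

/-- One step of the shift register. -/
noncomputable def T (w : Fin k → ZMod 2) : Fin k → ZMod 2 := fun i =>
  if h : (i : ℕ) + 1 < k then w ⟨(i : ℕ) + 1, h⟩
  else ∑ t ∈ Finset.range k, p.coeff (t + 1) * Wf k w (k - 1 - t)

/-- The solution sequence with initial state `w`. -/
noncomputable def seq (hk : 0 < k) (w : Fin k → ZMod 2) : ℕ → ZMod 2 := fun m =>
  ((T k p)^[m] w) ⟨0, hk⟩

variable {k}

lemma seq_lt (hk : 0 < k) (w : Fin k → ZMod 2) :
    ∀ {i : ℕ} (h : i < k) (j : ℕ), ((T k p)^[j] w) ⟨i, h⟩ = seq k p hk w (j + i) := by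
  intro i
  induction i with
  | zero => intro h j; simp [seq]
  | succ i ih =>
    intro h j
    have h1 : ((T k p)^[j + 1] w) ⟨i, by omega⟩ = ((T k p)^[j] w) ⟨i + 1, h⟩ := by
      rw [Function.iterate_succ_apply']
      show T k p _ _ = _
      rw [T, dif_pos]
    have h2 := ih (by omega) (j + 1)
    rw [h1] at h2
    rw [h2]
    congr 1
    omega

lemma seq_init (hk : 0 < k) (w : Fin k → ZMod 2) {i : ℕ} (h : i < k) :
    seq k p hk w i = w ⟨i, h⟩ := by
  have := seq_lt p hk w h 0
  simpa using this.symm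

lemma seq_step (hk : 0 < k) (w : Fin k → ZMod 2) {m : ℕ} (hm : k ≤ m) :
    seq k p hk w m = ∑ i ∈ Finset.range k, p.coeff (i + 1) * seq k p hk w (m - (i + 1)) := by
  have h1 : seq k p hk w m = ((T k p)^[m - k + 1] w) ⟨k - 1, by omega⟩ := by
    rw [seq_lt p hk w (by omega) (m - k + 1)]
    congr 1
    omega
  rw [h1, Function.iterate_succ_apply']
  show T k p _ _ = _
  rw [T, dif_neg (by simp only [Fin.val_mk]; omega)]
  refine Finset.sum_congr rfl fun t ht => ?_
  congr 1
  rw [Wf, dif_pos (by omega : k - 1 - t < k), seq_lt p hk w _ (m - k)]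
  congr 1
  simp only [Finset.mem_range] at ht
  omega

lemma seq_rec (hk : 0 < k) (h0 : p.coeff 0 = 1) (w : Fin k → ZMod 2) :
    ∀ m, k ≤ m → ∑ i ∈ Finset.range (k + 1), p.coeff i * seq k p hk w (m - i) = 0 := by
  intro m hm
  rw [Finset.sum_range_succ']
  simp only [h0, Nat.sub_zero, one_mul]
  rw [← seq_step p hk w hm]
  exact CharTwo.add_self_eq_zero _




variable (k)

noncomputable def A : ZMod 2 →+* AdjoinRoot p := algebraMap (ZMod 2) (AdjoinRoot p)

noncomputable def bb (γ : AdjoinRoot p) : ℕ → AdjoinRoot p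
  | 0 => 1
  | s + 1 => γ * bb γ s + A p (p.coeff (s + 1))

noncomputable def Phi (γ : AdjoinRoot p) : (Fin k → ZMod 2) →ₗ[ZMod 2] AdjoinRoot p where
  toFun w := ∑ i ∈ Finset.range k, A p (Wf k w i) * bb p γ (k - 1 - i)
  map_add' u v := by
    rw [← Finset.sum_add_distrib]
    refine Finset.sum_congr rfl fun i _ => ?_
    simp only [Wf, Pi.add_apply]
    split_ifs <;> simp [add_mul]
  map_smul' a w := by
    simp only [RingHom.id_apply]
    rw [Finset.smul_sum]
    refine Finset.sum_congr rfl fun i _ => ?_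
    simp only [Wf, Pi.smul_apply, smul_eq_mul]
    split_ifs <;> simp [Algebra.smul_def, A, mul_assoc]

lemma Phi_apply (γ : AdjoinRoot p) (w : Fin k → ZMod 2) :
    Phi k p γ w = ∑ i ∈ Finset.range k, A p (Wf k w i) * bb p γ (k - 1 - i) := rfl

variable {k p}

/-- `β^s * bb s` is a partial sum of `p` evaluated at `β`. -/
lemma bb_beta (γ : AdjoinRoot p) (hγ : γ * AdjoinRoot.root p = 1) (h0 : p.coeff 0 = 1) :
    ∀ s : ℕ, (AdjoinRoot.root p) ^ s * bb p γ s
      = ∑ t ∈ Finset.range (s + 1), A p (p.coeff t) * (AdjoinRoot.root p) ^ t := by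
  intro s
  induction s with
  | zero => simp [bb, h0, A]
  | succ s ih =>
    rw [Finset.sum_range_succ, ← ih, bb]
    set β := AdjoinRoot.root p
    have : β ^ (s + 1) * (γ * bb p γ s) = β ^ s * bb p γ s := by
      rw [pow_succ]
      calc β ^ s * β * (γ * bb p γ s) = β ^ s * bb p γ s * (γ * β) := by ring
      _ = β ^ s * bb p γ s := by rw [hγ]; ring
    rw [mul_add, this]
    ring

/-- The wrap-around identity `γ * bb (k-1) = 1`. -/
lemma bb_wrap (hk : 1 ≤ k) (hdeg : p.natDegree = k) (hk1 : p.coeff k = 1)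
    (h0 : p.coeff 0 = 1) (γ : AdjoinRoot p) (hγ : γ * AdjoinRoot.root p = 1) :
    γ * bb p γ (k - 1) = 1 := by
  set β := AdjoinRoot.root p with hβ
  have haev : ∑ t ∈ Finset.range (k + 1), A p (p.coeff t) * β ^ t = 0 := by
    have := AdjoinRoot.eval₂_root p
    rwa [Polynomial.eval₂_eq_sum_range, hdeg] at this
  have h1 : β ^ (k - 1) * bb p γ (k - 1)
      = ∑ t ∈ Finset.range k, A p (p.coeff t) * β ^ t := by
    have := bb_beta γ hγ h0 (k - 1)
    rwa [show k - 1 + 1 = k by omega] at this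
  have h2 : ∑ t ∈ Finset.range k, A p (p.coeff t) * β ^ t = β ^ k := by
    have := haev
    rw [Finset.sum_range_succ, hk1] at this
    have h3 : A p (1 : ZMod 2) = 1 := map_one _
    rw [h3, one_mul] at this
    have h4 : ∑ t ∈ Finset.range k, A p (p.coeff t) * β ^ t = -β ^ k := by
      linear_combination this
    rw [h4]
    have h5 : (2 : AdjoinRoot p) = 0 := by
      rw [show (2 : AdjoinRoot p) = A p 2 from (map_ofNat (A p) 2).symm,
        show (2 : ZMod 2) = 0 from rfl, map_zero]
    linear_combination -(β ^ k) * h5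
  -- now γ * bb (k-1) = γ^k * β^(k-1) * bb (k-1) * β^(k-1)... do it by multiplying
  have hβk : β ^ (k - 1) * bb p γ (k - 1) = β ^ k := by rw [h1, h2]
  have hcancel : γ ^ (k - 1) * β ^ (k - 1) = 1 := by
    rw [← mul_pow, hγ, one_pow]
  calc γ * bb p γ (k - 1) = γ * (γ ^ (k - 1) * β ^ (k - 1)) * bb p γ (k - 1) := by
        rw [hcancel]; ring
    _ = γ * γ ^ (k - 1) * (β ^ (k - 1) * bb p γ (k - 1)) := by ring
    _ = γ ^ k * β ^ k := by rw [hβk, ← pow_succ', show k - 1 + 1 = k by omega]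
    _ = 1 := by rw [← mul_pow, hγ, one_pow]

lemma bb_rel (γ : AdjoinRoot p) (s : ℕ) :
    γ * bb p γ s = bb p γ (s + 1) + A p (p.coeff (s + 1)) := by
  rw [bb]
  have : (2 : AdjoinRoot p) = 0 := by
    rw [show (2 : AdjoinRoot p) = A p 2 from (map_ofNat (A p) 2).symm,
      show (2 : ZMod 2) = 0 from rfl, map_zero]
  linear_combination (-(A p (p.coeff (s + 1)))) * this






lemma WfT_lt (w : Fin k → ZMod 2) {i : ℕ} (hi : i + 1 < k) :
    Wf k (T k p w) i = Wf k w (i + 1) := by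
  rw [Wf, dif_pos (by omega : i < k), Wf, dif_pos hi]
  show T k p w _ = _
  rw [T, dif_pos (by simpa using hi)]

lemma WfT_last (hk : 1 ≤ k) (w : Fin k → ZMod 2) :
    Wf k (T k p w) (k - 1) = ∑ t ∈ Finset.range k, p.coeff (t + 1) * Wf k w (k - 1 - t) := by
  rw [Wf, dif_pos (by omega : k - 1 < k)]
  show T k p w _ = _
  rw [T, dif_neg (by simp only [Fin.val_mk]; omega)]


lemma phi_T (hk : 1 ≤ k) (hdeg : p.natDegree = k) (hk1 : p.coeff k = 1)
    (h0 : p.coeff 0 = 1) (γ : AdjoinRoot p) (hγ : γ * AdjoinRoot.root p = 1)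
    (w : Fin k → ZMod 2) :
    Phi k p γ (T k p w) = γ * Phi k p γ w := by
  have hwrap := bb_wrap hk hdeg hk1 h0 γ hγ
  have hlast := WfT_last (p := p) hk w
  obtain ⟨K, rfl⟩ : ∃ K, k = K + 1 := ⟨k - 1, by omega⟩
  simp only [Nat.add_sub_cancel] at hwrap hlast
  rw [Phi_apply, Phi_apply]
  simp only [Nat.add_sub_cancel]
  rw [Finset.mul_sum, Finset.sum_range_succ, Finset.sum_range_succ']
  have e1 : ∀ i ∈ Finset.range K,
      A p (Wf (K + 1) (T (K + 1) p w) i) * bb p γ (K - i)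
      = A p (Wf (K + 1) w (i + 1)) * bb p γ (K - i) := by
    intro i hi
    rw [WfT_lt w (by simpa using Finset.mem_range.mp hi)]
  rw [Finset.sum_congr rfl e1]
  have e2 : ∀ i ∈ Finset.range K,
      γ * (A p (Wf (K + 1) w (i + 1)) * bb p γ (K - (i + 1)))
      = A p (Wf (K + 1) w (i + 1)) * bb p γ (K - i)
        + A p (p.coeff (K - i)) * A p (Wf (K + 1) w (i + 1)) := by
    intro i hi
    have hi' : i < K := Finset.mem_range.mp hi
    have hb : γ * bb p γ (K - (i + 1)) = bb p γ (K - i) + A p (p.coeff (K - i)) := by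
      have := bb_rel γ (K - (i + 1))
      rwa [show K - (i + 1) + 1 = K - i by omega] at this
    calc γ * (A p (Wf (K + 1) w (i + 1)) * bb p γ (K - (i + 1)))
        = A p (Wf (K + 1) w (i + 1)) * (γ * bb p γ (K - (i + 1))) := by ring
      _ = _ := by rw [hb]; ring
  rw [Finset.sum_congr rfl e2, Finset.sum_add_distrib]
  have e3 : γ * (A p (Wf (K + 1) w 0) * bb p γ (K - 0)) = A p (Wf (K + 1) w 0) := by
    rw [Nat.sub_zero]
    calc γ * (A p (Wf (K + 1) w 0) * bb p γ K)
        = A p (Wf (K + 1) w 0) * (γ * bb p γ K) := by ring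
      _ = _ := by rw [hwrap]; ring
  rw [e3]
  have e4 : A p (Wf (K + 1) (T (K + 1) p w) K) * bb p γ (K - K)
      = ∑ i ∈ Finset.range K, A p (p.coeff (K - i)) * A p (Wf (K + 1) w (i + 1))
        + A p (Wf (K + 1) w 0) := by
    rw [hlast, Nat.sub_self]
    show A p _ * (1 : AdjoinRoot p) = _
    rw [mul_one, map_sum, Finset.sum_range_succ]
    congr 1
    · rw [← Finset.sum_range_reflect (fun t => A p (p.coeff (t + 1) * Wf (K + 1) w (K - t))) K]
      refine Finset.sum_congr rfl fun j hj => ?_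
      have hj' : j < K := Finset.mem_range.mp hj
      rw [show K - 1 - j + 1 = K - j by omega, show K - (K - 1 - j) = j + 1 by omega, map_mul]
    · rw [hk1, Nat.sub_self, one_mul]
  rw [e4]
  ring

lemma phi_bij (hk : 1 ≤ k) (hdeg : p.natDegree = k) (hirr : Irreducible p)
    (hord : orderOf (AdjoinRoot.root p) = 2 ^ k - 1)
    (hk1 : p.coeff k = 1) (h0 : p.coeff 0 = 1)
    (γ : AdjoinRoot p) (hγ : γ * AdjoinRoot.root p = 1) :
    Function.Injective (Phi k p γ) ∧ Function.Surjective (Phi k p γ) := by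
  haveI := Fact.mk hirr
  set β := AdjoinRoot.root p with hβ
  set R := LinearMap.range (Phi k p γ) with hR
  have hone : (1 : AdjoinRoot p) ∈ R := by
    refine ⟨Pi.single ⟨k - 1, by omega⟩ 1, ?_⟩
    rw [Phi_apply]
    rw [Finset.sum_eq_single_of_mem (k - 1) (Finset.mem_range.mpr (by omega))]
    · rw [Nat.sub_self, Wf, dif_pos (by omega : k - 1 < k), Pi.single_apply,
        if_pos rfl, map_one, one_mul]
      rfl
    · intro i hi hne
      rw [Wf, dif_pos (Finset.mem_range.mp hi), Pi.single_apply,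
        if_neg (by simp only [Fin.mk.injEq]; exact hne), map_zero, zero_mul]
  have hmul : ∀ x ∈ R, γ * x ∈ R := by
    rintro x ⟨w, rfl⟩
    exact ⟨T k p w, phi_T hk hdeg hk1 h0 γ hγ w⟩
  have hpow : ∀ m : ℕ, γ ^ m ∈ R := by
    intro m; induction m with
    | zero => simpa using hone
    | succ m ih => rw [pow_succ, mul_comm]; exact hmul _ ih
  have hN1 : 1 ≤ 2 ^ k - 1 := by
    have := Nat.one_lt_two_pow (by omega : k ≠ 0); omega
  have hβN : β ^ (2 ^ k - 1) = 1 := by rw [← hord]; exact pow_orderOf_eq_one β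
  have hγN : γ ^ (2 ^ k - 1) = 1 := by
    calc γ ^ (2 ^ k - 1) = γ ^ (2 ^ k - 1) * β ^ (2 ^ k - 1) := by rw [hβN, mul_one]
    _ = (γ * β) ^ (2 ^ k - 1) := (mul_pow _ _ _).symm
    _ = 1 := by rw [hγ, one_pow]
  have hβpow : β = γ ^ (2 ^ k - 1 - 1) := by
    calc β = (γ ^ (2 ^ k - 1 - 1) * γ) * β := by
          rw [← pow_succ, show 2 ^ k - 1 - 1 + 1 = 2 ^ k - 1 by omega, hγN, one_mul]
    _ = γ ^ (2 ^ k - 1 - 1) * (γ * β) := by ring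
    _ = γ ^ (2 ^ k - 1 - 1) := by rw [hγ, mul_one]
  have hβi : ∀ i : ℕ, β ^ i ∈ R := fun i => by
    rw [hβpow, ← pow_mul]; exact hpow _
  have hRtop : R = ⊤ := by
    rw [eq_top_iff, ← (AdjoinRoot.powerBasis (hirr.ne_zero)).basis.span_eq]
    refine Submodule.span_le.mpr ?_
    rintro x ⟨i, rfl⟩
    rw [PowerBasis.basis_eq_pow, AdjoinRoot.powerBasis_gen]
    exact hβi i
  have hsurj : Function.Surjective (Phi k p γ) := LinearMap.range_eq_top.mp (hR ▸ hRtop)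
  refine ⟨?_, hsurj⟩
  have hfr : Module.finrank (ZMod 2) (AdjoinRoot p) = k := by
    rw [(AdjoinRoot.powerBasis hirr.ne_zero).finrank, AdjoinRoot.powerBasis_dim, hdeg]
  have hrn := LinearMap.finrank_range_add_finrank_ker (Phi k p γ)
  rw [← hR, hRtop, finrank_top, hfr, Module.finrank_fin_fun] at hrn
  have hker : Module.finrank (ZMod 2) (LinearMap.ker (Phi k p γ)) = 0 := by omega
  rw [← LinearMap.ker_eq_bot]
  exact Submodule.finrank_eq_zero.mp hker

lemma exists_shift (hk : 1 ≤ k) (hdeg : p.natDegree = k) (hirr : Irreducible p)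
    (hord : orderOf (AdjoinRoot.root p) = 2 ^ k - 1)
    (hk1 : p.coeff k = 1) (h0 : p.coeff 0 = 1)
    (c : ℕ → ZMod 2)
    (hrec : ∀ m, k ≤ m → ∑ i ∈ Finset.range (k + 1), p.coeff i * c (m - i) = 0)
    (hinit : ∃ i < k, c i ≠ 0)
    (w : Fin k → ZMod 2) (hw : w ≠ 0) :
    ∃ j : ℕ, ∀ i : Fin k, c (j + i) = w i := by
  haveI := Fact.mk hirr
  set β := AdjoinRoot.root p with hβdef
  have hN1 : 1 ≤ 2 ^ k - 1 := by
    have := Nat.one_lt_two_pow (by omega : k ≠ 0); omega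
  have hβ0 : β ≠ 0 := by
    intro h
    have := pow_orderOf_eq_one β
    rw [hord, h, zero_pow (by omega : 2 ^ k - 1 ≠ 0)] at this
    exact zero_ne_one this
  set γ := β⁻¹ with hγdef
  have hγ : γ * β = 1 := inv_mul_cancel₀ hβ0
  obtain ⟨hinj, hsurj⟩ := phi_bij hk hdeg hirr hord hk1 h0 γ hγ
  set st : ℕ → Fin k → ZMod 2 := fun j i => c (j + i) with hst
  have hTst : ∀ j, T k p (st j) = st (j + 1) := by
    intro j; funext i
    rw [T]
    split_ifs with h
    · show c (j + ((i : ℕ) + 1)) = c ((j + 1) + (i : ℕ))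
      congr 1; omega
    · have h2 : st (j + 1) i = c (j + k) := by
        show c ((j + 1) + (i : ℕ)) = _
        have := i.isLt
        congr 1; omega
      rw [h2, step h0 (hrec (j + k) (by omega))]
      refine Finset.sum_congr rfl fun t ht => ?_
      have ht' : t < k := Finset.mem_range.mp ht
      congr 1
      rw [Wf, dif_pos (by omega : k - 1 - t < k)]
      show c (j + (k - 1 - t)) = c (j + k - (t + 1))
      congr 1; omega
  have hphist : ∀ j, Phi k p γ (st j) = γ ^ j * Phi k p γ (st 0) := by
    intro j
    induction j with
    | zero => rw [pow_zero, one_mul]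
    | succ j ih =>
      rw [← hTst j, phi_T hk hdeg hk1 h0 γ hγ, ih, pow_succ]
      ring
  have hst0 : st 0 ≠ 0 := by
    obtain ⟨i, hik, hi⟩ := hinit
    intro h
    have := congrFun h ⟨i, hik⟩
    apply hi
    simpa [hst] using this
  have hz0 : Phi k p γ (st 0) ≠ 0 := fun h => hst0 (hinj (by rw [h, map_zero]))
  have hzw : Phi k p γ w ≠ 0 := fun h => hw (hinj (by rw [h, map_zero]))
  haveI : Module.Finite (ZMod 2) (AdjoinRoot p) := (AdjoinRoot.powerBasis hirr.ne_zero).finite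
  haveI : Finite (AdjoinRoot p) := Module.finite_of_finite (ZMod 2)
  set u : (AdjoinRoot p)ˣ := Units.mk0 γ (by rw [hγdef]; exact inv_ne_zero hβ0) with hu
  have hords : orderOf u = 2 ^ k - 1 := by
    have h1 : u = (Units.mk0 β hβ0)⁻¹ := by
      ext; simp [hu, hγdef]
    rw [h1, orderOf_inv, ← hord]
    exact (orderOf_units (y := Units.mk0 β hβ0)).symm
  have hcardF : Nat.card (AdjoinRoot p) = 2 ^ k := by
    letI : Fintype (AdjoinRoot p) := Fintype.ofFinite _
    have hfr : Module.finrank (ZMod 2) (AdjoinRoot p) = k := by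
      rw [(AdjoinRoot.powerBasis hirr.ne_zero).finrank, AdjoinRoot.powerBasis_dim, hdeg]
    rw [Nat.card_eq_fintype_card, Module.card_eq_pow_finrank (K := ZMod 2), ZMod.card, hfr]
  have hcardU : Nat.card (AdjoinRoot p)ˣ = 2 ^ k - 1 := by rw [Nat.card_units, hcardF]
  have htop : Subgroup.zpowers u = ⊤ := by
    apply Subgroup.eq_top_of_card_eq
    rw [Nat.card_zpowers, hords, hcardU]
  set z : AdjoinRoot p := Phi k p γ w * (Phi k p γ (st 0))⁻¹ with hz
  set v : (AdjoinRoot p)ˣ := Units.mk0 z (mul_ne_zero hzw (inv_ne_zero hz0)) with hv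
  have hvmem : v ∈ Subgroup.zpowers u := htop ▸ Subgroup.mem_top v
  obtain ⟨m, hm⟩ := ((isOfFinOrder_of_finite u).mem_powers_iff_mem_zpowers).mpr hvmem
  refine ⟨m, ?_⟩
  have hγm : γ ^ m = z := by
    have := congrArg Units.val hm
    rw [Units.val_pow_eq_pow_val] at this
    exact this
  have heq : Phi k p γ (st m) = Phi k p γ w := by
    rw [hphist m, hγm, hz]
    field_simp
  have := hinj heq
  intro i
  exact congrFun this i

def ve (n : ℕ) (v : Fin n → ZMod 2) : ℕ → ZMod 2 := fun m => if h : m < n then v ⟨m, h⟩ else 0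

lemma code_iff {k n : ℕ} {p : Polynomial (ZMod 2)} (v : Fin n → ZMod 2) :
    v ∈ PRCode k n p ↔ ∀ m, k ≤ m → m < n →
      ∑ i ∈ Finset.range (k + 1), p.coeff i * ve n v (m - i) = 0 := by
  constructor
  · intro hv m hm hmn
    have := hv ⟨m, hmn⟩ hm
    rw [← this]
    refine Finset.sum_congr rfl fun i _ => ?_
    congr 1
    rw [ve, dif_pos]
  · intro hv m hm
    have := hv m hm m.isLt
    rw [← this]
    refine Finset.sum_congr rfl fun i _ => ?_
    congr 1
    rw [ve, dif_pos]

theorem stmt0' (k n : ℕ) (hk : 1 ≤ k) (hn : k ≤ n)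
    (p : Polynomial (ZMod 2)) (hdeg : p.natDegree = k) (hirr : Irreducible p)
    (hord : orderOf (AdjoinRoot.root p) = 2 ^ k - 1)
    (c : ℕ → ZMod 2)
    (hrec : ∀ m, k ≤ m → ∑ i ∈ Finset.range (k + 1), p.coeff i * c (m - i) = 0)
    (hinit : ∃ i < k, c i ≠ 0) :
    ({w : Fin n → ZMod 2 | ∃ j : ℕ, ∀ i : Fin n, w i = c (j + i)} ∪ {0}
        = PRCode k n p) ∧
    ∃ W : Submodule (ZMod 2) (Fin n → ZMod 2),
      (W : Set (Fin n → ZMod 2))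
          = {w : Fin n → ZMod 2 | ∃ j : ℕ, ∀ i : Fin n, w i = c (j + i)} ∪ {0} ∧
      Module.finrank (ZMod 2) W = k := by
  have hk1 : p.coeff k = 1 := by
    have h1 : p.leadingCoeff ≠ 0 := by
      simpa [Polynomial.leadingCoeff_eq_zero] using hirr.ne_zero
    have h2 : ∀ a : ZMod 2, a ≠ 0 → a = 1 := by decide
    rw [← hdeg]
    exact h2 _ h1
  have h0 : p.coeff 0 = 1 := by
    rcases (by decide : ∀ a : ZMod 2, a = 0 ∨ a = 1) (p.coeff 0) with hz | h1
    · exfalso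
      have hdvd : Polynomial.X ∣ p := Polynomial.X_dvd_iff.mpr hz
      have hassoc : Associated Polynomial.X p :=
        (Polynomial.irreducible_X).associated_of_dvd hirr hdvd
      obtain ⟨u, hu⟩ := hassoc
      obtain ⟨r, hr, hcr⟩ := Polynomial.isUnit_iff.mp u.isUnit
      have hr1 : r = 1 := (by decide : ∀ a : ZMod 2, a ≠ 0 → a = 1) r hr.ne_zero
      rw [hr1] at hcr
      have hpX : p = Polynomial.X := by rw [← hu, ← hcr]; simp
      have hk1' : k = 1 := by rw [← hdeg, hpX, Polynomial.natDegree_X]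
      subst hk1'
      have hc0 := hrec 1 le_rfl
      rw [hpX] at hc0
      rw [Finset.sum_range_succ, Finset.sum_range_succ] at hc0
      simp only [Finset.range_zero, Finset.sum_empty, Polynomial.coeff_X_zero,
        Polynomial.coeff_X_one, zero_add, zero_mul, one_mul, add_zero, Nat.sub_self] at hc0
      obtain ⟨i, hik, hi⟩ := hinit
      interval_cases i
      exact hi hc0
    · exact h1
  -- the window sequence shifted by j satisfies the recurrence
  have hshift : ∀ j m, k ≤ m →
      ∑ i ∈ Finset.range (k + 1), p.coeff i * c (j + (m - i)) = 0 := by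
    intro j m hm
    have := hrec (j + m) (by omega)
    rw [← this]
    refine Finset.sum_congr rfl fun i hi => ?_
    have h3 : i < k + 1 := Finset.mem_range.mp hi
    have h4 : j + (m - i) = j + m - i := by omega
    rw [h4]
  have heq : ({w : Fin n → ZMod 2 | ∃ j : ℕ, ∀ i : Fin n, w i = c (j + i)} ∪ {0}
      = PRCode k n p) := by
    apply Set.Subset.antisymm
    · rintro v (⟨j, hj⟩ | hv)
      · intro m hm
        have := hshift j m hm
        rw [← this]
        refine Finset.sum_congr rfl fun i hi => ?_
        congr 1
        exact hj _
      · rw [Set.mem_singleton_iff] at hv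
        subst hv
        intro m hm
        simp
    · intro v hv
      by_cases hv0 : v = 0
      · exact Or.inr hv0
      · left
        have hcode := (code_iff v).mp hv
        set w : Fin k → ZMod 2 := fun i => v ⟨i, lt_of_lt_of_le i.isLt hn⟩ with hw
        have hwne : w ≠ 0 := by
          intro hw0
          apply hv0
          have hz : ∀ m, m < n → ve n v m = 0 := by
            refine uniq hk h0 hcode (fun m hm hmn => by simp) ?_
            intro i hik
            have : ve n v i = w ⟨i, hik⟩ := by
              rw [ve, dif_pos (by omega)]
            rw [this, hw0]
            rfl
          funext i
          have := hz i i.isLt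
          rwa [ve, dif_pos i.isLt, Fin.eta] at this
        obtain ⟨j, hj⟩ := exists_shift hk hdeg hirr hord hk1 h0 c hrec hinit w hwne
        refine ⟨j, fun i => ?_⟩
        have hz : ∀ m, m < n → ve n v m = c (j + m) := by
          refine uniq hk h0 hcode ?_ ?_
          · intro m hm hmn
            exact hshift j m hm
          · intro i hik
            rw [ve, dif_pos (by omega)]
            exact (hj ⟨i, hik⟩).symm
        have := hz i i.isLt
        rwa [ve, dif_pos i.isLt, Fin.eta] at this
  refine ⟨heq, ?_⟩
  set W : Submodule (ZMod 2) (Fin n → ZMod 2) :=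
    { carrier := PRCode k n p
      add_mem' := by
        intro a b ha hb m hm
        simp only [Pi.add_apply, mul_add, Finset.sum_add_distrib]
        rw [ha m hm, hb m hm, add_zero]
      zero_mem' := by intro m hm; simp
      smul_mem' := by
        intro a v hv m hm
        simp only [Pi.smul_apply, smul_eq_mul]
        calc ∑ i ∈ Finset.range (k + 1),
            p.coeff i * (a * v ⟨(m : ℕ) - i, lt_of_le_of_lt (Nat.sub_le _ _) m.isLt⟩)
            = a * ∑ i ∈ Finset.range (k + 1),
              p.coeff i * v ⟨(m : ℕ) - i, lt_of_le_of_lt (Nat.sub_le _ _) m.isLt⟩ := by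
              rw [Finset.mul_sum]; exact Finset.sum_congr rfl fun i _ => by ring
          _ = 0 := by rw [hv m hm, mul_zero] } with hWdef
  refine ⟨W, heq.symm, ?_⟩
  -- linear map to the first k coordinates
  set e : W →ₗ[ZMod 2] (Fin k → ZMod 2) :=
    (LinearMap.funLeft (ZMod 2) (ZMod 2) (Fin.castLE hn)).comp W.subtype with he
  have hinj : Function.Injective e := by
    intro x y hxy
    apply Subtype.ext
    funext i
    have hz : ∀ m, m < n → ve n x.val m = ve n y.val m := by
      refine uniq hk h0 ((code_iff x.val).mp x.2) ((code_iff y.val).mp y.2) ?_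
      intro i hik
      rw [ve, dif_pos (by omega), ve, dif_pos (by omega)]
      exact congrFun hxy ⟨i, hik⟩
    have := hz i i.isLt
    rwa [ve, dif_pos i.isLt, ve, dif_pos i.isLt, Fin.eta] at this
  have hsurj : Function.Surjective e := by
    intro w
    set s := seq k p hk w with hs
    set v : Fin n → ZMod 2 := fun i => s i with hv
    have hvc : v ∈ PRCode k n p := by
      refine (code_iff v).mpr fun m hm hmn => ?_
      have := seq_rec p hk h0 w m hm
      rw [← this]
      refine Finset.sum_congr rfl fun i _ => ?_
      congr 1
      rw [ve, dif_pos (by omega : m - i < n)]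
    refine ⟨⟨v, hvc⟩, ?_⟩
    funext i
    show v (Fin.castLE hn i) = w i
    have : v (Fin.castLE hn i) = s i := rfl
    rw [this, hs, seq_init p hk w i.isLt, Fin.eta]
  have hfr := (LinearEquiv.ofBijective e ⟨hinj, hsurj⟩).finrank_eq
  rw [hfr, Module.finrank_fin_fun]

end S0

/-- For a primitive `p` of degree `k ≥ 1`, an m-sequence `c` generated by `p`
from a nonzero initial state, and `n ≥ k`, the set of length-`n` windows of `c` together with
the zero vector equals the set of all length-`n` solutions of the recurrence (the PR code);
in particular it is an 𝔽₂-linear subspace of dimension `k`. -/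
theorem stmt0 (k n : ℕ) (hk : 1 ≤ k) (hn : k ≤ n)
    (p : Polynomial (ZMod 2)) (hp : IsPrimitivePoly k p)
    (c : ℕ → ZMod 2)
    (hrec : ∀ m, k ≤ m → ∑ i ∈ Finset.range (k + 1), p.coeff i * c (m - i) = 0)
    (hinit : ∃ i < k, c i ≠ 0) :
    ({w : Fin n → ZMod 2 | ∃ j : ℕ, ∀ i : Fin n, w i = c (j + i)} ∪ {0}
        = PRCode k n p) ∧
    ∃ W : Submodule (ZMod 2) (Fin n → ZMod 2),
      (W : Set (Fin n → ZMod 2))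
          = {w : Fin n → ZMod 2 | ∃ j : ℕ, ∀ i : Fin n, w i = c (j + i)} ∪ {0} ∧
      Module.finrank (ZMod 2) W = k := by
  obtain ⟨hdeg, hirr, hord⟩ := hp
  exact S0.stmt0' k n hk hn p hdeg hirr hord c hrec hinit
end

section
/- Let p be a primitive polynomial of degree k ≥ 1 over 𝔽₂ and let c be the m-sequence generated by p from a nonzero initial state. Then the map j ↦ (c_j, c_{j+1}, …, c_{j+k−1}) is a bijection from {0, 1, …, 2^k − 2} onto the set of nonzero vectors 𝔽₂^k ∖ {0}; that is, every nonzero k-tuple occurs exactly once as a window of length k within one period of the m-sequence. -/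
private lemma zmod2_add_self {M : Type*} [AddCommMonoid M] [Module (ZMod 2) M] (x : M) :
    x + x = 0 := by
  have h : ((2 : ZMod 2)) • x = 0 := by
    rw [show (2 : ZMod 2) = 0 by decide, zero_smul]
  simpa [two_smul] using h

private lemma zmod2_cancel {M : Type*} [AddCommMonoid M] [Module (ZMod 2) M] {a b : M}
    (h : a + b = 0) : b = a := by
  have h2 : a + (a + b) = b := by rw [← add_assoc, zmod2_add_self, zero_add]
  rw [← h2, h, add_zero]



/-- The map `j ↦ (c_j, …, c_{j+k-1})` is a bijection from `{0, …, 2^k - 2}`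
onto the nonzero vectors of `𝔽₂^k`. -/
theorem stmt1 (k : ℕ) (hk : 1 ≤ k)
    (p : Polynomial (ZMod 2)) (hp : IsPrimitivePoly k p)
    (c : ℕ → ZMod 2)
    (hrec : ∀ m, k ≤ m → ∑ i ∈ Finset.range (k + 1), p.coeff i * c (m - i) = 0)
    (hinit : ∃ i < k, c i ≠ 0) :
    Set.BijOn (fun j : ℕ => fun i : Fin k => c (j + i))
      (Set.Iio (2 ^ k - 1)) {v : Fin k → ZMod 2 | v ≠ 0} := by
  obtain ⟨hdeg, hirr, hord⟩ := hp
  haveI : Fact (Irreducible p) := ⟨hirr⟩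
  set F := AdjoinRoot p
  set α : F := AdjoinRoot.root p with hαdef
  have hp0 : p ≠ 0 := hirr.ne_zero
  have haev : (Polynomial.aeval α) p = 0 := by
    rw [Polynomial.aeval_def, AdjoinRoot.algebraMap_eq]
    exact AdjoinRoot.eval₂_root p
  have hpk : 1 ≤ 2 ^ k - 1 := by
    have : 2 ^ 1 ≤ 2 ^ k := Nat.pow_le_pow_right (by norm_num) hk
    omega
  have hαpow : α ^ (2 ^ k - 1) = 1 := by rw [← hord]; exact pow_orderOf_eq_one α
  have hαne : α ≠ 0 := by
    intro h
    rw [h, zero_pow (by omega)] at hαpow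
    exact zero_ne_one hαpow
  -- coeff 0 = 1
  have hc0 : p.coeff 0 = 1 := by
    have hne : p.coeff 0 ≠ 0 := by
      intro h
      obtain ⟨d, hd⟩ := Polynomial.X_dvd_iff.mpr h
      rcases hirr.isUnit_or_isUnit hd with hX | hdu
      · exact Polynomial.not_isUnit_X hX
      · obtain ⟨r, hr, hrd⟩ := Polynomial.isUnit_iff.mp hdu
        have h1 : (0 : F) = α * algebraMap (ZMod 2) F r := by
          rw [← haev]
          have h0 : (Polynomial.aeval α) (Polynomial.X * d) = α * algebraMap (ZMod 2) F r := by
            rw [map_mul, Polynomial.aeval_X, ← hrd, Polynomial.aeval_C]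
          rw [← h0, ← hd]
        have h2 : algebraMap (ZMod 2) F r = 0 := by
          rcases mul_eq_zero.mp h1.symm with h | h
          · exact absurd h hαne
          · exact h
        exact (hr.map (algebraMap (ZMod 2) F)).ne_zero h2
    have : ∀ x : ZMod 2, x ≠ 0 → x = 1 := by decide
    exact this _ hne
  have hmon : p.Monic := by
    have hl : p.leadingCoeff ≠ 0 := Polynomial.leadingCoeff_ne_zero.mpr hp0
    have : ∀ x : ZMod 2, x ≠ 0 → x = 1 := by decide
    exact this _ hl
  -- units, γ
  have hu : IsUnit α := hαne.isUnit
  set u : Fˣ := hu.unit with hudef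
  set γ : F := ((u⁻¹ : Fˣ) : F) with hγdef
  have hγα : γ * α = 1 := by
    have h1 : ((u⁻¹ * u : Fˣ) : F) = 1 := by rw [inv_mul_cancel]; rfl
    rw [← h1, Units.val_mul, hγdef, hu.unit_spec]
  have hγord : orderOf γ = 2 ^ k - 1 := by
    rw [hγdef, orderOf_units, orderOf_inv, ← orderOf_units, hu.unit_spec, hord]
  have hγne : γ ≠ 0 := Units.ne_zero _
  -- power identities
  have hpow : ∀ a b : ℕ, b ≤ a → α ^ (a - b) = α ^ a * γ ^ b := by
    intro a b hba
    have h1 : α ^ a = α ^ (a - b) * α ^ b := by rw [← pow_add, Nat.sub_add_cancel hba]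
    rw [h1, mul_assoc, ← mul_pow, mul_comm α γ, hγα, one_pow, mul_one]
  have hγpow : ∀ a b : ℕ, b ≤ a → γ ^ (a - b) = γ ^ a * α ^ b := by
    intro a b hba
    have h1 : γ ^ a = γ ^ (a - b) * γ ^ b := by rw [← pow_add, Nat.sub_add_cancel hba]
    rw [h1, mul_assoc, ← mul_pow, hγα, one_pow, mul_one]
  -- basis
  have hdim : (AdjoinRoot.powerBasis hp0).dim = k := hdeg
  set B : Module.Basis (Fin k) (ZMod 2) F := (AdjoinRoot.powerBasis hp0).basis.reindex (finCongr hdim) with hBdef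
  have hB : ∀ i : Fin k, B i = α ^ (i : ℕ) := by
    intro i
    rw [hBdef, Module.Basis.reindex_apply, PowerBasis.basis_eq_pow]
    simp [AdjoinRoot.powerBasis_gen, finCongr, hαdef]
  -- the linear functional M
  set M : F →ₗ[ZMod 2] ZMod 2 := B.constr (ZMod 2) (fun i : Fin k => c (k - 1 - (i : ℕ))) with hMdef
  have hM : ∀ i : Fin k, M (α ^ (i : ℕ)) = c (k - 1 - (i : ℕ)) := by
    intro i
    rw [← hB i, hMdef]
    exact B.constr_basis (ZMod 2) _ i
  -- the key sum identity in F
  have hsum0 : ∀ m, k ≤ m →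
      ∑ i ∈ Finset.range (k + 1), p.coeff i • (α ^ (k - 1) * γ ^ (m - i)) = 0 := by
    intro m hm
    have hterm : ∀ i ∈ Finset.range (k + 1),
        p.coeff i • (α ^ (k - 1) * γ ^ (m - i)) = (α ^ (k - 1) * γ ^ m) * (p.coeff i • α ^ i) := by
      intro i hi
      have hik : i ≤ m := le_trans (Nat.lt_succ_iff.mp (Finset.mem_range.mp hi)) hm
      rw [hγpow m i hik, Algebra.smul_def, Algebra.smul_def]
      ring
    rw [Finset.sum_congr rfl hterm, ← Finset.mul_sum]
    have hz : ∑ i ∈ Finset.range (k + 1), p.coeff i • α ^ i = 0 := by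
      rw [← Polynomial.aeval_eq_sum_range' (n := k + 1) (by omega) α, haev]
    rw [hz, mul_zero]
  -- key: c m = M (α^(k-1) * γ^m)
  have key : ∀ m, c m = M (α ^ (k - 1) * γ ^ m) := by
    intro m
    induction m using Nat.strong_induction_on with
    | _ m ih =>
      rcases lt_or_ge m k with hmk | hmk
      · have hmd : m ≤ k - 1 := by omega
        rw [← hpow (k - 1) m hmd]
        have h1 : k - 1 - m < k := by omega
        have h2 := hM ⟨k - 1 - m, h1⟩
        simp only [Fin.val_mk] at h2
        rw [h2, Nat.sub_sub_self hmd]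
      · have h1 := hrec m hmk
        rw [Finset.sum_range_succ'] at h1
        simp only [Nat.sub_zero, hc0, one_mul] at h1
        have hcm : c m = ∑ i ∈ Finset.range k, p.coeff (i + 1) * c (m - (i + 1)) :=
          zmod2_cancel h1
        have h2 := hsum0 m hmk
        rw [Finset.sum_range_succ'] at h2
        simp only [Nat.sub_zero, hc0, one_smul] at h2
        have hx : α ^ (k - 1) * γ ^ m
            = ∑ i ∈ Finset.range k, p.coeff (i + 1) • (α ^ (k - 1) * γ ^ (m - (i + 1))) :=
          zmod2_cancel h2
        rw [hx, map_sum, hcm]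
        refine Finset.sum_congr rfl fun i hi => ?_
        rw [map_smul, smul_eq_mul]
        congr 1
        exact ih (m - (i + 1)) (by omega)
  -- the window linear map
  set Psi : F →ₗ[ZMod 2] (Fin k → ZMod 2) :=
    LinearMap.pi (fun i : Fin k =>
      M ∘ₗ LinearMap.mulLeft (ZMod 2) (α ^ (k - 1) * γ ^ (i : ℕ))) with hPsidef
  have hPsi : ∀ (β : F) (i : Fin k), Psi β i = M (α ^ (k - 1) * γ ^ (i : ℕ) * β) := by
    intro β i; rfl
  have hwin : ∀ j : ℕ, (fun i : Fin k => c (j + (i : ℕ))) = Psi (γ ^ j) := by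
    intro j; funext i
    rw [hPsi, key (j + (i : ℕ))]
    congr 1
    rw [pow_add]
    ring
  -- injectivity of Psi
  have hPsiinj : Function.Injective Psi := by
    rw [← LinearMap.ker_eq_bot, LinearMap.ker_eq_bot']
    intro β hβ
    by_contra hβne
    have hN : (M ∘ₗ LinearMap.mulRight (ZMod 2) β) = 0 := by
      apply B.ext
      intro i
      rw [LinearMap.zero_apply, LinearMap.comp_apply, LinearMap.mulRight_apply, hB i]
      have hik : (i : ℕ) ≤ k - 1 := by omega
      have h1 := congrFun hβ ⟨k - 1 - (i : ℕ), by omega⟩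
      rw [hPsi] at h1
      simp only [Fin.val_mk, Pi.zero_apply] at h1
      rw [← hpow (k - 1) (k - 1 - (i : ℕ)) (by omega), Nat.sub_sub_self hik] at h1
      exact h1
    obtain ⟨i0, hi0k, hi0⟩ := hinit
    have h2 := LinearMap.congr_fun hN (α ^ (k - 1 - i0) * β⁻¹)
    rw [LinearMap.zero_apply, LinearMap.comp_apply, LinearMap.mulRight_apply, mul_assoc,
      inv_mul_cancel₀ hβne, mul_one] at h2
    have h3 := hM ⟨k - 1 - i0, by omega⟩
    simp only [Fin.val_mk] at h3
    rw [Nat.sub_sub_self (by omega : i0 ≤ k - 1)] at h3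
    exact hi0 (by rw [← h3, h2])
  -- surjectivity of Psi
  haveI : Module.Finite (ZMod 2) F := Module.Finite.of_basis B
  have hfr : Module.finrank (ZMod 2) F = k := by
    rw [(AdjoinRoot.powerBasis hp0).finrank, hdim]
  have hPsisurj : Function.Surjective Psi := by
    rw [← LinearMap.injective_iff_surjective_of_finrank_eq_finrank
      (by rw [hfr, Module.finrank_fin_fun])]
    exact hPsiinj
  -- F is a finite field; γ generates the units
  haveI : Finite F := Finite.of_equiv _ B.equivFun.toEquiv.symm
  haveI : Fintype F := Fintype.ofFinite F
  have hcard : Fintype.card F = 2 ^ k := by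
    rw [Module.card_fintype B, ZMod.card, Fintype.card_fin]
  have hgen : ∀ w : Fˣ, ∃ n : ℕ, (u⁻¹ : Fˣ) ^ n = w := by
    have htop : Subgroup.zpowers (u⁻¹ : Fˣ) = ⊤ := by
      apply Subgroup.eq_top_of_card_eq
      rw [Nat.card_zpowers, orderOf_inv, ← orderOf_units, hu.unit_spec, hord,
        Nat.card_eq_fintype_card, Fintype.card_units, hcard]
    intro w
    have hw : w ∈ Subgroup.zpowers (u⁻¹ : Fˣ) := htop ▸ Subgroup.mem_top w
    rw [← mem_powers_iff_mem_zpowers] at hw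
    obtain ⟨n, hn⟩ := hw
    exact ⟨n, hn⟩
  -- assembly
  refine ⟨?_, ?_, ?_⟩
  · intro j hj
    simp only [Set.mem_setOf_eq]
    rw [hwin j]
    intro h0
    have h1 : γ ^ j = 0 := hPsiinj (by rw [h0, map_zero])
    exact pow_ne_zero j hγne h1
  · intro j1 h1 j2 h2 heq
    simp only at heq
    rw [hwin j1, hwin j2] at heq
    have h3 : γ ^ j1 = γ ^ j2 := hPsiinj heq
    exact pow_injOn_Iio_orderOf (by rw [Set.mem_Iio, hγord]; exact h1)
      (by rw [Set.mem_Iio, hγord]; exact h2) h3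
  · intro v hv
    obtain ⟨β, hβ⟩ := hPsisurj v
    have hβne : β ≠ 0 := by
      rintro rfl
      rw [map_zero] at hβ
      exact hv hβ.symm
    obtain ⟨n, hn⟩ := hgen (Units.mk0 β hβne)
    have hβγ : γ ^ n = β := by
      have h4 := congrArg (Units.val) hn
      rw [Units.val_pow_eq_pow_val] at h4
      exact h4
    refine ⟨n % (2 ^ k - 1), Set.mem_Iio.mpr (Nat.mod_lt _ (by omega)), ?_⟩
    show (fun i : Fin k => c (n % (2 ^ k - 1) + (i : ℕ))) = v
    rw [hwin, ← hγord, pow_mod_orderOf, hβγ, hβ]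
end

section
/- Let p be a primitive polynomial of degree k ≥ 1 over 𝔽₂ and let c be the m-sequence generated by p from a nonzero initial state. Then c is periodic with least period exactly 2^k − 1: c_{m + 2^k − 1} = c_m for all m ∈ ℕ, and for every integer T with 0 < T < 2^k − 1 there exists m ∈ ℕ with c_{m+T} ≠ c_m. -/
/-- Auxiliary field elements `B i = ∑_{t=0}^{k-1-i} p_t α^{t+i}` in `𝔽₂[x]/(p)`. -/
noncomputable def Bv (k : ℕ) (p : Polynomial (ZMod 2)) (i : ℕ) : AdjoinRoot p :=
  ∑ t ∈ Finset.range (k - i), p.coeff t • (AdjoinRoot.root p) ^ (t + i)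

/-- The field-valued state sequence `E m = ∑_{i<k} c_{m+i} • B i`. -/
noncomputable def Ev (k : ℕ) (p : Polynomial (ZMod 2)) (c : ℕ → ZMod 2) (m : ℕ) :
    AdjoinRoot p :=
  ∑ i ∈ Finset.range k, c (m + i) • Bv k p i

lemma addself {p : Polynomial (ZMod 2)} (x : AdjoinRoot p) : x + x = 0 := by
  have h : ((2 : ZMod 2)) • x = x + x := two_smul _ x
  have h2 : (2 : ZMod 2) = 0 := rfl
  rw [h2, zero_smul] at h
  exact h.symm

lemma zmod2_add_eq_zero {a b : ZMod 2} (h : a + b = 0) : a = b := by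
  revert h; revert a b; decide

lemma zmod2_ne_zero {a : ZMod 2} (h : a ≠ 0) : a = 1 := by
  revert h; revert a; decide

/-- `∑_{t=0}^{k} p_t α^t = 0`. -/
lemma aeval0 {k : ℕ} {p : Polynomial (ZMod 2)} (hdeg : p.natDegree = k) :
    ∑ t ∈ Finset.range (k + 1), p.coeff t • (AdjoinRoot.root p) ^ t = 0 := by
  have h : Polynomial.aeval (AdjoinRoot.root p) p = 0 := by
    rw [AdjoinRoot.aeval_eq, AdjoinRoot.mk_self]
  rw [Polynomial.aeval_eq_sum_range, hdeg] at h
  exact h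

/-- Linear independence of `1, α, …, α^{k-1}`. -/
lemma hLI {k : ℕ} {p : Polynomial (ZMod 2)} (hdeg : p.natDegree = k)
    (hirr : Irreducible p) (a : ℕ → ZMod 2)
    (h : ∑ s ∈ Finset.range k, a s • (AdjoinRoot.root p) ^ s = 0) :
    ∀ s < k, a s = 0 := by
  classical
  set g : Polynomial (ZMod 2) := ∑ s ∈ Finset.range k, Polynomial.C (a s) * Polynomial.X ^ s
    with hg
  have hcoeff : ∀ n, g.coeff n = if n < k then a n else 0 := by
    intro n
    rw [hg, Polynomial.finset_sum_coeff]
    have : ∀ s ∈ Finset.range k,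
        (Polynomial.C (a s) * Polynomial.X ^ s).coeff n = if n = s then a s else 0 := by
      intro s _
      rw [Polynomial.coeff_C_mul, Polynomial.coeff_X_pow, mul_ite, mul_one, mul_zero]
    rw [Finset.sum_congr rfl this, Finset.sum_ite_eq]
    simp [Finset.mem_range]
  have hmk : AdjoinRoot.mk p g = 0 := by
    rw [hg, map_sum, ← h]
    refine Finset.sum_congr rfl fun s _ => ?_
    rw [map_mul, map_pow, AdjoinRoot.mk_C, AdjoinRoot.mk_X, Algebra.smul_def,
      AdjoinRoot.algebraMap_eq]
  have hdvd : p ∣ g := AdjoinRoot.mk_eq_zero.mp hmk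
  have hg0 : g = 0 := by
    by_contra h0
    have hnd : g.natDegree < k := by
      by_contra hge
      push_neg at hge
      have hl := Polynomial.leadingCoeff_ne_zero.mpr h0
      rw [Polynomial.leadingCoeff, hcoeff, if_neg (by omega)] at hl
      exact hl rfl
    have hlt : g.degree < p.degree := by
      calc g.degree ≤ (g.natDegree : WithBot ℕ) := Polynomial.degree_le_natDegree
        _ < (k : WithBot ℕ) := by exact_mod_cast hnd
        _ = p.degree := by rw [Polynomial.degree_eq_natDegree hirr.ne_zero, hdeg]
    exact h0 (Polynomial.eq_zero_of_dvd_of_degree_lt hdvd hlt)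
  intro s hs
  have := hcoeff s
  rw [hg0, Polynomial.coeff_zero, if_pos hs] at this
  exact this.symm

/-- An m-sequence generated by a primitive polynomial of degree `k ≥ 1` from a
nonzero initial state is periodic with least period exactly `2^k - 1`. -/
theorem stmt2 (k : ℕ) (hk : 1 ≤ k)
    (p : Polynomial (ZMod 2)) (hp : IsPrimitivePoly k p)
    (c : ℕ → ZMod 2)
    (hrec : ∀ m, k ≤ m → ∑ i ∈ Finset.range (k + 1), p.coeff i * c (m - i) = 0)
    (hinit : ∃ i < k, c i ≠ 0) :
    (∀ m : ℕ, c (m + (2 ^ k - 1)) = c m) ∧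
    (∀ T : ℕ, 0 < T → T < 2 ^ k - 1 → ∃ m : ℕ, c (m + T) ≠ c m) := by
  classical
  obtain ⟨hdeg, hirr, hord⟩ := hp
  haveI : Fact (Irreducible p) := ⟨hirr⟩
  have hN1 : 1 ≤ 2 ^ k - 1 := by
    have : 2 ^ 1 ≤ 2 ^ k := Nat.pow_le_pow_right (by norm_num) hk
    omega
  set N := 2 ^ k - 1 with hNdef
  set α := AdjoinRoot.root p with hαdef
  -- leading coefficient
  have hpk : p.coeff k = 1 := by
    have h1 : p.coeff k = p.leadingCoeff := by rw [Polynomial.leadingCoeff, hdeg]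
    rw [h1]
    exact zmod2_ne_zero (Polynomial.leadingCoeff_ne_zero.mpr hirr.ne_zero)
  -- constant coefficient
  have hα1 : α ^ N = 1 := by rw [← hord]; exact pow_orderOf_eq_one α
  have hαne : α ≠ 0 := by
    intro h
    rw [h, zero_pow (by omega)] at hα1
    exact zero_ne_one hα1
  have hp0 : p.coeff 0 = 1 := by
    refine zmod2_ne_zero ?_
    intro h0
    have hdvd : Polynomial.X ∣ p := Polynomial.X_dvd_iff.mpr h0
    have hassoc : Associated (Polynomial.X : Polynomial (ZMod 2)) p :=
      Polynomial.irreducible_X.associated_of_dvd hirr hdvd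
    have hroot : α = 0 := by
      rw [hαdef, ← AdjoinRoot.mk_X, AdjoinRoot.mk_eq_zero]
      exact hassoc.symm.dvd
    exact hαne hroot
  -- rearranged recurrence
  have hrec' : ∀ m, ∑ i ∈ Finset.range k, p.coeff i * c (m + k - i) = c m := by
    intro m
    have h := hrec (m + k) (by omega)
    rw [Finset.sum_range_succ] at h
    have e : m + k - k = m := by omega
    rw [e, hpk, one_mul] at h
    exact zmod2_add_eq_zero h
  -- Bv facts
  have hBk : Bv k p k = 0 := by
    rw [Bv, Nat.sub_self, Finset.range_zero, Finset.sum_empty]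
  have hB0 : Bv k p 0 = α ^ k := by
    have h := aeval0 hdeg
    rw [Finset.sum_range_succ, hpk, one_smul] at h
    have : Bv k p 0 = ∑ t ∈ Finset.range k, p.coeff t • α ^ t := by
      rw [Bv, Nat.sub_zero]
      exact Finset.sum_congr rfl fun t _ => by rw [Nat.add_zero]
    rw [this]
    have h2 := congrArg (· + α ^ k) h
    simp only [zero_add] at h2
    rw [add_assoc, addself, add_zero] at h2
    exact h2
  have hstepB : ∀ i, i < k →
      α * Bv k p i = Bv k p (i + 1) + p.coeff (k - 1 - i) • α ^ k := by
    intro i hi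
    have h1 : k - i = (k - (i + 1)) + 1 := by omega
    calc α * Bv k p i = ∑ t ∈ Finset.range (k - i), p.coeff t • α ^ (t + (i + 1)) := by
          rw [Bv, Finset.mul_sum]
          refine Finset.sum_congr rfl fun t _ => ?_
          rw [mul_smul_comm, ← pow_succ', Nat.add_assoc]
      _ = Bv k p (i + 1) + p.coeff (k - 1 - i) • α ^ k := by
          rw [h1, Finset.sum_range_succ, Bv]
          have e2 : k - (i + 1) + (i + 1) = k := by omega
          have e1 : k - (i + 1) = k - 1 - i := by omega
          rw [e2, e1]
  -- key recursion for Ev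
  have hstep : ∀ m, α * Ev k p c (m + 1) = Ev k p c m := by
    intro m
    have hmain : α * Ev k p c (m + 1) =
        (∑ i ∈ Finset.range k, c (m + 1 + i) • Bv k p (i + 1)) +
          (∑ i ∈ Finset.range k, p.coeff (k - 1 - i) * c (m + 1 + i)) • α ^ k := by
      calc α * Ev k p c (m + 1)
          = ∑ i ∈ Finset.range k, (c (m + 1 + i) • Bv k p (i + 1) +
              (p.coeff (k - 1 - i) * c (m + 1 + i)) • α ^ k) := by
            rw [Ev, Finset.mul_sum]
            refine Finset.sum_congr rfl fun i hi => ?_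
            rw [Finset.mem_range] at hi
            rw [mul_smul_comm, hstepB i hi, smul_add, smul_smul,
              mul_comm (c (m + 1 + i)) (p.coeff (k - 1 - i))]
        _ = (∑ i ∈ Finset.range k, c (m + 1 + i) • Bv k p (i + 1)) +
              (∑ i ∈ Finset.range k, p.coeff (k - 1 - i) * c (m + 1 + i)) • α ^ k := by
            rw [Finset.sum_add_distrib, Finset.sum_smul]
    -- first part
    have hpart1 : (∑ i ∈ Finset.range k, c (m + 1 + i) • Bv k p (i + 1)) =
        Ev k p c m + c m • α ^ k := by
      have h := Finset.sum_range_succ' (fun i => c (m + i) • Bv k p i) k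
      rw [Finset.sum_range_succ] at h
      rw [hBk, smul_zero, add_zero] at h
      simp only [Nat.add_zero, hB0] at h
      have h2 := congrArg (· + c m • α ^ k) h
      rw [add_assoc, addself, add_zero] at h2
      have esum : ∑ i ∈ Finset.range k, c (m + 1 + i) • Bv k p (i + 1) =
          ∑ i ∈ Finset.range k, c (m + (i + 1)) • Bv k p (i + 1) :=
        Finset.sum_congr rfl fun i _ => by
          rw [show m + 1 + i = m + (i + 1) from by omega]
      rw [esum, Ev]
      exact h2.symm
    -- second part
    have hpart2 : (∑ i ∈ Finset.range k, p.coeff (k - 1 - i) * c (m + 1 + i)) = c m := by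
      have hterm : ∀ i ∈ Finset.range k,
          p.coeff (k - 1 - i) * c (m + 1 + i) =
            p.coeff (k - 1 - i) * c (m + k - (k - 1 - i)) := by
        intro i hi
        rw [Finset.mem_range] at hi
        have e : m + k - (k - 1 - i) = m + 1 + i := by omega
        rw [e]
      rw [Finset.sum_congr rfl hterm]
      have hrefl := Finset.sum_range_reflect (fun j => p.coeff j * c (m + k - j)) k
      rw [hrefl]
      exact hrec' m
    rw [hmain, hpart1, hpart2, add_assoc, addself, add_zero]
  -- E m = α^{-m} E 0
  have hEm : ∀ m, α ^ m * Ev k p c m = Ev k p c 0 := by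
    intro m
    induction m with
    | zero => rw [pow_zero, one_mul]
    | succ n ih =>
        rw [pow_succ, mul_assoc, hstep n]
        exact ih
  -- injectivity of the B-combination
  have hD : ∀ v : ℕ → ZMod 2, (∑ i ∈ Finset.range k, v i • Bv k p i = 0) →
      ∀ i < k, v i = 0 := by
    intro v hv
    set a : ℕ → ZMod 2 := fun s => ∑ i ∈ Finset.range (s + 1), v i * p.coeff (s - i) with ha
    have hsum : ∑ s ∈ Finset.range k, a s • α ^ s = 0 := by
      rw [← hv]
      have lhs : ∑ i ∈ Finset.range k, v i • Bv k p i =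
          ∑ i ∈ Finset.range k, ∑ t ∈ Finset.range (k - i),
            (v i * p.coeff t) • α ^ (t + i) := by
        refine Finset.sum_congr rfl fun i _ => ?_
        rw [Bv, Finset.smul_sum]
        refine Finset.sum_congr rfl fun t _ => ?_
        rw [smul_smul]
      have rhs : ∑ s ∈ Finset.range k, a s • α ^ s =
          ∑ s ∈ Finset.range k, ∑ i ∈ Finset.range (s + 1),
            (v i * p.coeff (s - i)) • α ^ s := by
        refine Finset.sum_congr rfl fun s _ => ?_
        rw [ha]
        simp only
        rw [Finset.sum_smul]
      rw [lhs, rhs, Finset.sum_sigma', Finset.sum_sigma']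
      refine (Finset.sum_nbij' (i := fun x : Σ _ : ℕ, ℕ => (⟨x.1 + x.2, x.1⟩ : Σ _ : ℕ, ℕ))
        (j := fun y : Σ _ : ℕ, ℕ => (⟨y.2, y.1 - y.2⟩ : Σ _ : ℕ, ℕ)) ?_ ?_ ?_ ?_ ?_).symm
      · intro x hx
        simp only [Finset.mem_sigma, Finset.mem_range] at hx ⊢
        omega
      · intro y hy
        simp only [Finset.mem_sigma, Finset.mem_range] at hy ⊢
        omega
      · intro x hx
        simp only [Finset.mem_sigma, Finset.mem_range] at hx
        simp only
        have e : x.1 + x.2 - x.1 = x.2 := by omega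
        rw [e]
      · intro y hy
        simp only [Finset.mem_sigma, Finset.mem_range] at hy
        simp only
        have e : y.2 + (y.1 - y.2) = y.1 := by omega
        rw [e]
      · intro x hx
        simp only [Finset.mem_sigma, Finset.mem_range] at hx
        simp only
        have e1 : x.1 + x.2 - x.1 = x.2 := by omega
        have e2 : x.2 + x.1 = x.1 + x.2 := by omega
        rw [e1, e2]
    have hz := hLI hdeg hirr a hsum
    intro i
    induction i using Nat.strong_induction_on with
    | _ i ih =>
      intro hik
      have hai : a i = 0 := hz i hik
      rw [ha] at hai
      simp only at hai
      rw [Finset.sum_range_succ] at hai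
      have hzero : ∀ j ∈ Finset.range i, v j * p.coeff (i - j) = 0 := by
        intro j hj
        rw [Finset.mem_range] at hj
        rw [ih j hj (by omega), zero_mul]
      rw [Finset.sum_congr rfl hzero, Finset.sum_const_zero, zero_add, Nat.sub_self,
        hp0, mul_one] at hai
      exact hai
  -- Ev determines the state
  have hstate : ∀ m m', Ev k p c m = Ev k p c m' → ∀ i < k, c (m + i) = c (m' + i) := by
    intro m m' h i hik
    have hv : ∑ i ∈ Finset.range k, (c (m + i) + c (m' + i)) • Bv k p i = 0 := by
      have : ∑ i ∈ Finset.range k, (c (m + i) + c (m' + i)) • Bv k p i =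
          Ev k p c m + Ev k p c m' := by
        rw [Ev, Ev, ← Finset.sum_add_distrib]
        refine Finset.sum_congr rfl fun i _ => ?_
        rw [add_smul]
      rw [this, h, addself]
    exact zmod2_add_eq_zero (hD _ hv i hik)
  -- nondegeneracy: Ev 0 ≠ 0
  have hE0 : Ev k p c 0 ≠ 0 := by
    intro h0
    obtain ⟨i0, hi0k, hi0⟩ := hinit
    apply hi0
    have := hD (fun i => c (0 + i)) (by exact h0) i0 hi0k
    simpa using this
  constructor
  · -- periodicity
    intro m
    have h1 : α ^ (m + N) * Ev k p c (m + N) = α ^ m * Ev k p c m := by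
      rw [hEm, hEm]
    rw [pow_add, hα1, mul_one] at h1
    have h2 : Ev k p c (m + N) = Ev k p c m :=
      mul_left_cancel₀ (pow_ne_zero m hαne) h1
    have := hstate (m + N) m h2 0 (by omega)
    rwa [Nat.add_zero, Nat.add_zero] at this
  · -- minimality
    intro T hT0 hTN
    by_contra hcon
    push_neg at hcon
    have hET : Ev k p c T = Ev k p c 0 := by
      rw [Ev, Ev]
      refine Finset.sum_congr rfl fun i _ => ?_
      have : T + i = i + T := by omega
      rw [this, hcon i, Nat.zero_add]
    have h1 : α ^ T * Ev k p c 0 = Ev k p c 0 := by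
      have h := hEm T
      rw [hET] at h
      exact h
    have h2 : α ^ T = 1 := by
      have := mul_right_cancel₀ hE0 (h1.trans (one_mul (Ev k p c 0)).symm)
      exact this
    have hdvd : N ∣ T := by rw [← hord]; exact orderOf_dvd_of_pow_eq_one h2
    have := Nat.le_of_dvd hT0 hdvd
    omega
end

section
/- Let p be a primitive polynomial of degree k ≥ 1 over 𝔽₂ and take n = 2^k − 1. Then every nonzero codeword v of the PR code C(p, n) has Hamming weight exactly 2^{k−1}; that is, the PR code of length 2^k − 1 is a simplex code. -/
open Polynomial Finset


-- counting lemma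
lemma fiber_count {F : Type*} [AddCommGroup F] [Module (ZMod 2) F] [Fintype F] [DecidableEq F]
    (L : F →ₗ[ZMod 2] ZMod 2) (hL : L ≠ 0) :
    2 * (Finset.univ.filter fun x => L x = 1).card = Fintype.card F := by
  classical
  obtain ⟨c, hc⟩ : ∃ c, L c ≠ 0 := by
    by_contra h
    push_neg at h
    exact hL (LinearMap.ext fun x => h x)
  have hone : ∀ a : ZMod 2, a ≠ 0 → a = 1 := by decide
  have hc1 : L c = 1 := hone _ hc
  have hchar : ∀ x : F, x + x = 0 := fun x => by
    have h := add_smul (1 : ZMod 2) 1 x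
    have h2 : (1 + 1 : ZMod 2) = 0 := by decide
    rw [h2, one_smul, zero_smul] at h
    exact h.symm
  have hbij : (Finset.univ.filter fun x => L x = 1).card
      = (Finset.univ.filter fun x => ¬ (L x = 1)).card := by
    apply Finset.card_bij (fun x _ => x + c)
    · intro a ha
      simp only [Finset.mem_filter, Finset.mem_univ, true_and] at ha ⊢
      rw [map_add, ha, hc1]
      decide
    · intro a _ b _ h
      simpa using congrArg (· + c) h
    · intro b hb
      simp only [Finset.mem_filter, Finset.mem_univ, true_and] at hb
      refine ⟨b + c, ?_, ?_⟩
      · simp only [Finset.mem_filter, Finset.mem_univ, true_and, map_add, hc1]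
        have hzero : ∀ a : ZMod 2, a ≠ 1 → a = 0 := by decide
        rw [hzero (L b) hb, zero_add]
      · rw [add_assoc, hchar, add_zero]
  have := Finset.card_filter_add_card_filter_not
    (s := (Finset.univ : Finset F)) (fun x => L x = 1)
  rw [Finset.card_univ] at this
  omega


/-- For `n = 2^k - 1`, every nonzero codeword of the PR code `C(p, n)` has
Hamming weight exactly `2^(k-1)` (the PR code of full length is a simplex code). -/
theorem stmt3 (k : ℕ) (hk : 1 ≤ k)
    (p : Polynomial (ZMod 2)) (hp : IsPrimitivePoly k p) :
    ∀ v ∈ PRCode k (2 ^ k - 1) p, v ≠ 0 → hammingNorm v = 2 ^ (k - 1) := by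
  classical
  obtain ⟨hdeg, hirr, hord⟩ := hp
  haveI : Fact (Irreducible p) := ⟨hirr⟩
  set n := 2 ^ k - 1 with hn
  intro v hv hv0
  have hkn : k < 2 ^ k := Nat.lt_two_pow_self
  have hn1 : 1 ≤ n := by omega
  set F := AdjoinRoot p with hF
  set α := AdjoinRoot.root p with hα
  have hp0 : p ≠ 0 := hirr.ne_zero
  -- α ≠ 0
  have hα0 : α ≠ 0 := by
    intro h
    have h1 : α ^ n = 1 := hord ▸ pow_orderOf_eq_one α
    rw [h, zero_pow (by omega : n ≠ 0)] at h1
    exact zero_ne_one h1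
  have hαu : IsUnit α := isUnit_iff_ne_zero.mpr hα0
  set u : Fˣ := hαu.unit with hu
  have huα : (u : F) = α := hαu.unit_spec
  set β : F := ((u⁻¹ : Fˣ) : F) with hβ
  have hβinv : β = α⁻¹ := by rw [hβ, ← huα]; exact Units.val_inv_eq_inv_val u
  -- p is monic and p.coeff 0 = 1, p.coeff k = 1
  have hmonic : p.Monic := by
    have h := Polynomial.leadingCoeff_ne_zero.mpr hp0
    have h2 : ∀ c : ZMod 2, c ≠ 0 → c = 1 := by decide
    exact h2 _ h
  have hminpoly : minpoly (ZMod 2) α = p := by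
    rw [hα, AdjoinRoot.minpoly_root hp0, hmonic.leadingCoeff, inv_one, map_one, mul_one]
  have haev : (Polynomial.aeval α) p = 0 := by
    rw [Polynomial.aeval_def, AdjoinRoot.algebraMap_eq]
    exact AdjoinRoot.eval₂_root p
  have hc0 : p.coeff 0 = 1 := by
    by_contra h
    have h0 : p.coeff 0 = 0 := by
      have h2 : ∀ c : ZMod 2, c ≠ 1 → c = 0 := by decide
      exact h2 _ h
    obtain ⟨q, hq⟩ := Polynomial.X_dvd_iff.mpr h0
    have hq0 : q ≠ 0 := by rintro rfl; simp at hq; exact hp0 hq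
    have haq : (Polynomial.aeval α) q = 0 := by
      have h3 : (Polynomial.aeval α) (X * q) = 0 := by rw [← hq]; exact haev
      rw [map_mul, Polynomial.aeval_X] at h3
      exact (mul_eq_zero.mp h3).resolve_left hα0
    have hdvd : p ∣ q := hminpoly ▸ minpoly.dvd (ZMod 2) α haq
    have h1 : p.natDegree ≤ q.natDegree := Polynomial.natDegree_le_of_dvd hdvd hq0
    have h2 : p.natDegree = 1 + q.natDegree := by
      rw [hq, Polynomial.natDegree_mul Polynomial.X_ne_zero hq0, Polynomial.natDegree_X]
    omega
  have hck : p.coeff k = 1 := by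
    rw [← hdeg]; exact hmonic.coeff_natDegree
  -- power basis
  set pb : PowerBasis (ZMod 2) F := AdjoinRoot.powerBasis hp0 with hpb
  have hpbdim : pb.dim = k := by rw [hpb, AdjoinRoot.powerBasis_dim, hdeg]
  have hpbgen : pb.gen = α := AdjoinRoot.powerBasis_gen hp0
  set M : F →ₗ[ZMod 2] ZMod 2 :=
    pb.basis.constr (ZMod 2) (fun i => v ⟨k - 1 - (i : ℕ), by have := i.isLt; omega⟩) with hM
  set L : F →ₗ[ZMod 2] ZMod 2 := M.comp (LinearMap.mulLeft (ZMod 2) (α ^ (k-1))) with hL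
  have hLapply : ∀ x : F, L x = M (α ^ (k-1) * x) := fun x => rfl
  have hMα : ∀ t, ∀ ht : t < k, M (α ^ t) = v ⟨k - 1 - t, by omega⟩ := by
    intro t ht
    have hb : pb.basis ⟨t, by omega⟩ = α ^ t := by
      rw [pb.basis_eq_pow, hpbgen]
    rw [← hb, hM, Module.Basis.constr_basis]
  have hαβ : ∀ a b : ℕ, b ≤ a → α ^ a * β ^ b = α ^ (a - b) := by
    intro a b hba
    have h1 : α ^ a = α ^ (a - b) * α ^ b := by rw [← pow_add]; congr 1; omega
    rw [h1, hβinv, inv_pow, mul_assoc, mul_inv_cancel₀ (pow_ne_zero _ hα0), mul_one]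
  have hrelk : ∑ i ∈ Finset.range (k+1), p.coeff i • β ^ (k - i) = 0 := by
    have h4 : α ^ k * (∑ i ∈ Finset.range (k+1), p.coeff i • β ^ (k - i)) = 0 := by
      rw [Finset.mul_sum]
      have hterm : ∀ i ∈ Finset.range (k+1),
          α ^ k * (p.coeff i • β ^ (k-i)) = p.coeff i • α ^ i := by
        intro i hi
        rw [Finset.mem_range] at hi
        rw [mul_smul_comm, hαβ k (k-i) (Nat.sub_le _ _)]
        have : k - (k - i) = i := by omega
        rw [this]
      rw [Finset.sum_congr rfl hterm]
      have h5 := Polynomial.aeval_eq_sum_range (p := p) α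
      rw [hdeg] at h5
      rw [← h5, haev]
    rcases mul_eq_zero.mp h4 with h | h
    · exact absurd h (pow_ne_zero _ hα0)
    · exact h
  have hrel : ∀ j, k ≤ j →
      ∑ i ∈ Finset.range (k+1), p.coeff i • β ^ (j - i) = 0 := by
    intro j hj
    have hterm : ∀ i ∈ Finset.range (k+1),
        p.coeff i • β ^ (j-i) = β ^ (j-k) * (p.coeff i • β ^ (k-i)) := by
      intro i hi
      rw [Finset.mem_range] at hi
      rw [mul_smul_comm, ← pow_add]
      have : j - k + (k - i) = j - i := by omega
      rw [this]
    rw [Finset.sum_congr rfl hterm, ← Finset.mul_sum, hrelk, mul_zero]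
  -- the main induction: L (β^j) = v j
  have main : ∀ j, ∀ hj : j < n, L (β ^ j) = v ⟨j, hj⟩ := by
    intro j
    induction j using Nat.strong_induction_on with
    | _ j ih =>
      intro hj
      rcases lt_or_ge j k with hjk | hjk
      · rw [hLapply, hαβ (k-1) j (by omega), hMα (k-1-j) (by omega)]
        congr 1
        exact Fin.ext (by simp; omega)
      · have h1 : ∑ i ∈ Finset.range (k+1), p.coeff i • L (β ^ (j - i)) = 0 := by
          have h := congrArg L (hrel j hjk)
          rw [map_sum, map_zero] at h
          simpa only [map_smul] using h
        have h2 := hv ⟨j, hj⟩ hjk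
        rw [Finset.sum_range_succ'] at h1 h2
        simp only [Nat.sub_zero, hc0, one_smul, one_mul, smul_eq_mul] at h1 h2
        have hsum : ∑ i ∈ Finset.range k, p.coeff (i+1) * L (β ^ (j-(i+1)))
            = ∑ i ∈ Finset.range k, p.coeff (i+1) *
              v ⟨j-(i+1), lt_of_le_of_lt (Nat.sub_le _ _) hj⟩ := by
          refine Finset.sum_congr rfl fun i hi => ?_
          rw [Finset.mem_range] at hi
          rw [ih (j-(i+1)) (by omega) (lt_of_le_of_lt (Nat.sub_le _ _) hj)]
        rw [hsum] at h1
        exact add_left_cancel (h1.trans h2.symm)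
  -- finiteness
  haveI : Module.Finite (ZMod 2) F := Module.Finite.of_basis pb.basis
  haveI : Finite F := Module.finite_of_finite (ZMod 2)
  haveI : Fintype F := Fintype.ofFinite F
  haveI : DecidableEq F := Classical.decEq F
  have hcardF : Fintype.card F = 2 ^ k := by
    rw [Module.card_fintype pb.basis, ZMod.card, Fintype.card_fin, hpbdim]
  have hone : ∀ a : ZMod 2, a ≠ 0 → a = 1 := by decide
  -- L ≠ 0
  have hLne : L ≠ 0 := by
    obtain ⟨m, hm⟩ : ∃ m, v m ≠ 0 := by
      by_contra h; push_neg at h; exact hv0 (funext fun m => h m)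
    intro h
    apply hm
    have h3 := main (m : ℕ) m.isLt
    rw [h] at h3
    rw [← h3]
    rfl
  -- injectivity of powers of β
  have hordu : orderOf (u⁻¹ : Fˣ) = n := by
    rw [orderOf_inv]
    have : orderOf (u : F) = orderOf u := orderOf_units
    rw [huα, hord] at this
    exact this.symm
  have hβpow : ∀ m : ℕ, β ^ m = ((u⁻¹ ^ m : Fˣ) : F) := fun m => by
    rw [hβ, Units.val_pow_eq_pow_val]
  have hinj : Function.Injective (fun m : Fin n => β ^ (m : ℕ)) := by
    intro a b hab
    simp only [hβpow] at hab
    have h2 : (u⁻¹ : Fˣ) ^ (a:ℕ) = u⁻¹ ^ (b:ℕ) := Units.ext hab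
    rw [pow_eq_pow_iff_modEq, hordu] at h2
    have h3 : (a : ℕ) % n = (b : ℕ) % n := h2
    rw [Nat.mod_eq_of_lt a.isLt, Nat.mod_eq_of_lt b.isLt] at h3
    exact Fin.ext h3
  have hβ0 : β ≠ 0 := by rw [hβinv]; exact inv_ne_zero hα0
  -- the image of the powers of β is everything nonzero
  have himg : Finset.image (fun m : Fin n => β ^ (m:ℕ)) Finset.univ
      = Finset.univ.erase 0 := by
    apply Finset.eq_of_subset_of_card_le
    · intro x hx
      simp only [Finset.mem_image] at hx
      obtain ⟨m, _, rfl⟩ := hx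
      exact Finset.mem_erase.mpr ⟨pow_ne_zero _ hβ0, Finset.mem_univ _⟩
    · rw [Finset.card_erase_of_mem (Finset.mem_univ 0), Finset.card_univ, hcardF,
        Finset.card_image_of_injective _ hinj, Finset.card_univ, Fintype.card_fin]
  -- count
  have hham : hammingNorm v = (Finset.univ.filter fun x : F => L x = 1).card := by
    have hh : hammingNorm v = (Finset.univ.filter fun m : Fin n => v m ≠ 0).card := rfl
    rw [hh]
    refine Finset.card_bij (fun (m : Fin n) _ => β ^ (m : ℕ)) ?_ ?_ ?_
    · intro m hm
      simp only [Finset.mem_filter, Finset.mem_univ, true_and] at hm ⊢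
      have h3 := main (m : ℕ) m.isLt
      have h4 : v ⟨(m : ℕ), m.isLt⟩ = v m := rfl
      rw [h4] at h3
      rw [h3]
      exact hone _ hm
    · intro a _ b _ h
      exact hinj h
    · intro x hx
      simp only [Finset.mem_filter, Finset.mem_univ, true_and] at hx
      have hx0 : x ≠ 0 := by
        intro h
        rw [h, map_zero] at hx
        exact zero_ne_one hx
      have : x ∈ Finset.image (fun m : Fin n => β ^ (m:ℕ)) Finset.univ := by
        rw [himg]
        exact Finset.mem_erase.mpr ⟨hx0, Finset.mem_univ _⟩
      obtain ⟨m, _, rfl⟩ := Finset.mem_image.mp this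
      refine ⟨m, ?_, rfl⟩
      simp only [Finset.mem_filter, Finset.mem_univ, true_and]
      have h3 := main (m : ℕ) m.isLt
      have h4 : v ⟨(m : ℕ), m.isLt⟩ = v m := rfl
      rw [h4] at h3
      rw [← h3, hx]
      decide
  have hf := fiber_count L hLne
  rw [hcardF] at hf
  rw [hham]
  have h2k : 2 ^ k = 2 * 2 ^ (k - 1) := by
    rw [← pow_succ']
    congr 1
    omega
  omega
end

section
/- Let p be a primitive polynomial of degree k ≥ 1 over 𝔽₂ and let n satisfy k ≤ n ≤ 2^k − 1. Then Σ_{v ∈ C(p,n)} wt(v)² = 2^{k−2} · n · (n + 1); equivalently, the Hamming weights of the 2^k codewords of the PR code C(p, n) have mean n/2 and variance n/4. -/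
open Finset Module Polynomial


lemma zmod2_cases (x : ZMod 2) : x = 0 ∨ x = 1 := by revert x; decide

noncomputable def chi : ZMod 2 → ℚ := fun x => if x = 0 then 1 else -1

lemma chi_add (x y : ZMod 2) : chi (x + y) = chi x * chi y := by
  rcases zmod2_cases x with h | h <;> rcases zmod2_cases y with h' | h' <;>
    subst h <;> subst h' <;>
    simp [chi, show (1:ZMod 2) + 1 = 0 from rfl]

lemma ind_eq (x : ZMod 2) : (if x ≠ 0 then (1:ℚ) else 0) = (1 - chi x) / 2 := by
  rcases zmod2_cases x with h | h <;> subst h <;> simp [chi]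

section CharSum
variable {V : Type} [AddCommGroup V] [Module (ZMod 2) V] [Fintype (Dual (ZMod 2) V)]

lemma sum_chi_eq_zero [Module.Projective (ZMod 2) V] (c : V) (hc : c ≠ 0) :
    ∑ f : Dual (ZMod 2) V, chi (f c) = 0 := by
  obtain ⟨g, hg⟩ : ∃ g : Dual (ZMod 2) V, g c ≠ 0 := by
    by_contra h
    push_neg at h
    exact hc ((Module.forall_dual_apply_eq_zero_iff (ZMod 2) c).mp h)
  have hg1 : g c = 1 := (zmod2_cases (g c)).resolve_left hg
  have key : ∑ f : Dual (ZMod 2) V, chi (f c) = ∑ f : Dual (ZMod 2) V, chi ((f + g) c) :=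
    (Fintype.sum_equiv (Equiv.addRight g) _ _ (by intro f; rfl)).symm
  have h3 : ∑ f : Dual (ZMod 2) V, chi ((f + g) c) = -∑ f : Dual (ZMod 2) V, chi (f c) := by
    rw [← Finset.sum_neg_distrib]
    refine Finset.sum_congr rfl fun f _ => ?_
    rw [LinearMap.add_apply, chi_add, hg1]
    simp [chi]
  have h2 : ∑ f : Dual (ZMod 2) V, chi (f c) = -∑ f : Dual (ZMod 2) V, chi (f c) :=
    key.trans h3
  linarith

end CharSum

/-- For `k ≤ n ≤ 2^k - 1`, the sum of the squared Hamming weights of the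
codewords of `C(p, n)` equals `2^(k-2) · n · (n+1)`; equivalently the weights have mean `n/2`
and variance `n/4`. -/
theorem stmt9 (k n : ℕ) (hk : 1 ≤ k) (hn : k ≤ n) (hn' : n ≤ 2 ^ k - 1)
    (p : Polynomial (ZMod 2)) (hp : IsPrimitivePoly k p) :
    ∑ v ∈ (Set.toFinite (PRCode k n p)).toFinset, ((hammingNorm v : ℚ)) ^ 2
      = (2 : ℚ) ^ ((k : ℤ) - 2) * n * (n + 1) := by
  classical
  obtain ⟨hdeg, hirr, hord⟩ := hp
  haveI hfact : Fact (Irreducible p) := ⟨hirr⟩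
  have hp0 : p ≠ 0 := hirr.ne_zero
  set F := AdjoinRoot p with hFdef
  set α : F := AdjoinRoot.root p with hαdef
  -- basic facts about α
  have h2k : 2 ≤ 2 ^ k := by
    calc 2 = 2^1 := (pow_one 2).symm
    _ ≤ 2^k := Nat.pow_le_pow_right (by norm_num) hk
  have hordpos : 0 < orderOf α := by rw [hord]; omega
  have hαu : IsUnit α := ((orderOf_pos_iff).mp hordpos).isUnit
  have hα0 : α ≠ 0 := hαu.ne_zero
  have hαpow : α ^ (2 ^ k - 1) = 1 := by rw [← hord]; exact pow_orderOf_eq_one α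
  set β : F := α⁻¹ with hβdef
  have hβ0 : β ≠ 0 := inv_ne_zero hα0
  have hβpow : ∀ m : ℕ, β ^ m = (α ^ m)⁻¹ := fun m => by rw [hβdef, inv_pow]
  -- instances
  haveI : Module.Finite (ZMod 2) F :=
    Module.Finite.of_basis (AdjoinRoot.powerBasis hp0).basis
  haveI : Finite F := Module.finite_of_finite (ZMod 2)
  haveI : Fintype F := Fintype.ofFinite F
  haveI : Finite (Dual (ZMod 2) F) :=
    Finite.of_injective (fun f => (f : F → ZMod 2)) DFunLike.coe_injective
  haveI : Fintype (Dual (ZMod 2) F) := Fintype.ofFinite _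
  have hfr : finrank (ZMod 2) F = k := by
    rw [(AdjoinRoot.powerBasis hp0).finrank, AdjoinRoot.powerBasis_dim, hdeg]
  have hcardD : (Fintype.card (Dual (ZMod 2) F) : ℚ) = 2 ^ (k : ℕ) := by
    have hfrD : finrank (ZMod 2) (Dual (ZMod 2) F) = k := by
      rw [Subspace.dual_finrank_eq, hfr]
    have := Module.card_fintype (Module.finBasis (ZMod 2) (Dual (ZMod 2) F))
    rw [this]
    simp [hfrD, ZMod.card]
  -- aeval relation
  have haeval : ∑ i ∈ Finset.range (k + 1), p.coeff i • α ^ i = 0 := by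
    rw [← hdeg, ← aeval_eq_sum_range, hαdef, AdjoinRoot.aeval_eq, AdjoinRoot.mk_self]
  -- p has nonzero constant coefficient
  have hp00 : p.coeff 0 = 1 := by
    rcases zmod2_cases (p.coeff 0) with h0 | h0
    · exfalso
      have hXdvd : X ∣ p := X_dvd_iff.mpr h0
      obtain ⟨c, hc⟩ := hXdvd
      rcases hirr.isUnit_or_isUnit hc with hu | hu
      · exact Polynomial.not_isUnit_X hu
      · obtain ⟨r, hr, hrc⟩ := Polynomial.isUnit_iff.mp hu
        have hr1 : r = 1 := (zmod2_cases r).resolve_left (by rintro rfl; simp at hr)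
        subst hr1
        rw [← hrc, map_one, mul_one] at hc
        apply hα0
        have hk1 : k = 1 := by
          have hd := hdeg
          rw [hc, natDegree_X] at hd
          omega
        have h := haeval
        simp only [hc, hk1] at h
        simpa [Finset.sum_range_succ, coeff_X] using h
    · exact h0
  -- recurrence for powers of β
  have hrecβ : ∀ m : ℕ, k ≤ m →
      ∑ i ∈ Finset.range (k + 1), p.coeff i • β ^ (m - i) = 0 := by
    intro m hm
    have hαm : α ^ m ≠ 0 := pow_ne_zero _ hα0
    have key : (∑ i ∈ Finset.range (k + 1), p.coeff i • β ^ (m - i)) * α ^ m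
        = ∑ i ∈ Finset.range (k + 1), p.coeff i • α ^ i := by
      rw [Finset.sum_mul]
      refine Finset.sum_congr rfl fun i hi => ?_
      rw [Finset.mem_range] at hi
      have him : i ≤ m := le_trans (Nat.lt_succ_iff.mp hi) hm
      rw [smul_mul_assoc]
      congr 1
      rw [hβpow]
      have : α ^ m = α ^ (m - i) * α ^ i := by
        rw [← pow_add, Nat.sub_add_cancel him]
      rw [this, inv_mul_cancel_left₀ (pow_ne_zero _ hα0)]
    have h0 : (∑ i ∈ Finset.range (k + 1), p.coeff i • β ^ (m - i)) * α ^ m = 0 := by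
      rw [key, haeval]
    exact (mul_eq_zero.mp h0).resolve_right hαm
  -- injectivity of powers of β
  have hαinj : ∀ i j : ℕ, i < n → j < n → α ^ i = α ^ j → i = j := by
    have key : ∀ i j : ℕ, i ≤ j → j < n → α ^ i = α ^ j → i = j := by
      intro i j hij hjn h
      have h1 : α ^ (j - i) * α ^ i = 1 * α ^ i := by
        rw [one_mul, ← pow_add, Nat.sub_add_cancel hij, h]
      have h2 : α ^ (j - i) = 1 := mul_right_cancel₀ (pow_ne_zero i hα0) h1
      have h3 : orderOf α ∣ (j - i) := orderOf_dvd_of_pow_eq_one h2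
      rw [hord] at h3
      have h4 : j - i = 0 := Nat.eq_zero_of_dvd_of_lt h3 (by omega)
      omega
    intro i j hin hjn h
    rcases le_total i j with hij | hij
    · exact key i j hij hjn h
    · exact (key j i hij hin h.symm).symm
  have hβinj : ∀ i j : ℕ, i < n → j < n → β ^ i = β ^ j → i = j := by
    intro i j hin hjn h
    apply hαinj i j hin hjn
    rw [hβpow, hβpow] at h
    exact inv_injective h
  -- span of first k powers of β
  set S := Submodule.span (ZMod 2) (Set.range fun i : Fin k => β ^ (i : ℕ)) with hSdef
  have hβmem : ∀ m : ℕ, β ^ m ∈ S := by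
    intro m
    induction m using Nat.strong_induction_on with
    | _ m ih =>
      rcases lt_or_ge m k with hmk | hmk
      · exact Submodule.subset_span ⟨⟨m, hmk⟩, rfl⟩
      · have hrec := hrecβ m hmk
        rw [Finset.sum_range_succ'] at hrec
        simp only [Nat.sub_zero, hp00, one_smul] at hrec
        have hβm : β ^ m = -∑ i ∈ Finset.range k, p.coeff (i + 1) • β ^ (m - (i + 1)) :=
          eq_neg_of_add_eq_zero_right hrec
        rw [hβm]
        refine Submodule.neg_mem _ (Submodule.sum_mem _ fun i hi => ?_)
        refine Submodule.smul_mem _ _ (ih _ ?_)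
        have : 1 ≤ i + 1 := Nat.le_add_left 1 i
        omega
  have hspan : S = ⊤ := by
    rw [eq_top_iff]
    rw [← (AdjoinRoot.powerBasis hp0).basis.span_eq]
    refine Submodule.span_le.mpr ?_
    rintro x ⟨i, rfl⟩
    rw [(AdjoinRoot.powerBasis hp0).basis_eq_pow, AdjoinRoot.powerBasis_gen]
    have hαβ : α = β ^ (2 ^ k - 2) := by
      have h1 : α ^ (2 ^ k - 2) * α = 1 := by
        rw [← pow_succ, show 2 ^ k - 2 + 1 = 2 ^ k - 1 by omega, hαpow]
      rw [hβpow, inv_eq_of_mul_eq_one_right h1]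
    have : (AdjoinRoot.root p : F) = α := rfl
    rw [this, hαβ, ← pow_mul]
    exact hβmem _
  -- the linear parametrization
  set L : Dual (ZMod 2) F →ₗ[ZMod 2] (Fin n → ZMod 2) :=
    LinearMap.pi (fun i : Fin n => LinearMap.applyₗ (β ^ (i : ℕ))) with hLdef
  have hLapp : ∀ (f : Dual (ZMod 2) F) (i : Fin n), L f i = f (β ^ (i : ℕ)) := fun f i => rfl
  have hbb : ∀ x : F, x + x = 0 := by
    intro x
    have h := two_smul (ZMod 2) x
    rw [show (2 : ZMod 2) = 0 by decide, zero_smul] at h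
    exact h.symm
  have hinj : Function.Injective L := by
    intro f g hfg
    refine LinearMap.ext_on (hSdef ▸ hspan) ?_
    rintro x ⟨i, rfl⟩
    have hik : (i : ℕ) < n := lt_of_lt_of_le i.2 hn
    have h := congrFun hfg ⟨(i : ℕ), hik⟩
    rw [hLapp, hLapp] at h
    exact h
  have hrange : Set.range L = PRCode k n p := by
    apply Set.Subset.antisymm
    · rintro _ ⟨f, rfl⟩
      intro m hm
      have hsum : ∑ i ∈ Finset.range (k + 1),
          p.coeff i * (L f) ⟨(m : ℕ) - i, lt_of_le_of_lt (Nat.sub_le _ _) m.isLt⟩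
          = f (∑ i ∈ Finset.range (k + 1), p.coeff i • β ^ ((m : ℕ) - i)) := by
        rw [map_sum]
        refine Finset.sum_congr rfl fun i hi => ?_
        rw [map_smul, hLapp, smul_eq_mul]
      rw [hsum, hrecβ (m : ℕ) hm, map_zero]
    · intro v hv
      have hcard : Fintype.card (Fin k) = finrank (ZMod 2) F := by simp [hfr]
      set b := basisOfTopLeSpanOfCardEqFinrank (fun i : Fin k => β ^ (i : ℕ))
        (le_of_eq (hSdef ▸ hspan).symm) hcard with hbdef
      set f := b.constr (ZMod 2) (fun i : Fin k => v ⟨(i : ℕ), lt_of_lt_of_le i.2 hn⟩) with hfdef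
      have hfβ : ∀ i : Fin k, f (β ^ (i : ℕ)) = v ⟨(i : ℕ), lt_of_lt_of_le i.2 hn⟩ := by
        intro i
        have hb : b i = β ^ (i : ℕ) := by
          rw [hbdef, coe_basisOfTopLeSpanOfCardEqFinrank]
        rw [← hb, hfdef, Basis.constr_basis]
      have key : ∀ m : ℕ, ∀ hmn : m < n, f (β ^ m) = v ⟨m, hmn⟩ := by
        intro m
        induction m using Nat.strong_induction_on with
        | _ m ih =>
          intro hmn
          rcases lt_or_ge m k with hmk | hmk
          · exact hfβ ⟨m, hmk⟩
          · have h1 : ∑ i ∈ Finset.range (k + 1), p.coeff i • f (β ^ (m - i)) = 0 := by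
              have h := congrArg f (hrecβ m hmk)
              rw [map_sum, map_zero] at h
              simpa only [map_smul] using h
            rw [Finset.sum_range_succ'] at h1
            simp only [Nat.sub_zero, hp00, one_smul] at h1
            have hf : f (β ^ m)
                = -∑ i ∈ Finset.range k, p.coeff (i + 1) • f (β ^ (m - (i + 1))) :=
              eq_neg_of_add_eq_zero_right h1
            have h2 := hv ⟨m, hmn⟩ hmk
            rw [Finset.sum_range_succ'] at h2
            simp only [Nat.sub_zero, hp00, one_mul] at h2
            have hvm : v ⟨m, hmn⟩ = -∑ i ∈ Finset.range k,
                p.coeff (i + 1) * v ⟨m - (i + 1), lt_of_le_of_lt (Nat.sub_le _ _) hmn⟩ :=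
              eq_neg_of_add_eq_zero_right h2
            rw [hf, hvm]
            congr 1
            refine Finset.sum_congr rfl fun i hi => ?_
            rw [smul_eq_mul]
            congr 1
            exact ih (m - (i + 1)) (by omega) (by omega)
      refine ⟨f, ?_⟩
      funext j
      rw [hLapp]
      exact key (j : ℕ) j.2
  -- rewrite the sum
  have hfs : (Set.toFinite (PRCode k n p)).toFinset = Finset.univ.image L := by
    ext v
    simp only [Set.Finite.mem_toFinset, Finset.mem_image, Finset.mem_univ, true_and]
    rw [← hrange]
    exact ⟨fun h => h, fun h => h⟩
  rw [hfs, Finset.sum_image (fun a _ b _ h => hinj h)]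
  -- expand hamming norm
  have hnorm : ∀ f : Dual (ZMod 2) F,
      ((hammingNorm (L f) : ℚ)) = ∑ i : Fin n, (1 - chi (f (β ^ (i : ℕ)))) / 2 := by
    intro f
    rw [hammingNorm]
    rw [Finset.card_filter]
    push_cast
    refine Finset.sum_congr rfl fun i _ => ?_
    rw [← ind_eq, hLapp]
  -- diagonal character sum
  have hD : ∀ i j : Fin n,
      ∑ f : Dual (ZMod 2) F, chi (f (β ^ (i : ℕ) + β ^ (j : ℕ)))
        = if i = j then (2 : ℚ) ^ (k : ℕ) else 0 := by
    intro i j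
    by_cases hij : i = j
    · subst hij
      rw [if_pos rfl, hbb (β ^ (i : ℕ))]
      simp only [map_zero]
      rw [show chi 0 = 1 from if_pos rfl]
      rw [Finset.sum_const, card_univ, nsmul_eq_mul, mul_one, hcardD]
    · rw [if_neg hij]
      apply sum_chi_eq_zero
      intro hzero
      apply hij
      have heq : β ^ (i : ℕ) = β ^ (j : ℕ) := by
        have h := hbb (β ^ (j : ℕ))
        exact add_right_cancel (hzero.trans h.symm)
      exact Fin.ext (hβinj _ _ i.2 j.2 heq)
  have hinner : ∀ i j : Fin n,
      ∑ f : Dual (ZMod 2) F,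
        ((1 - chi (f (β ^ (i : ℕ)))) / 2) * ((1 - chi (f (β ^ (j : ℕ)))) / 2)
        = ((2 : ℚ) ^ (k : ℕ) + (if i = j then (2 : ℚ) ^ (k : ℕ) else 0)) / 4 := by
    intro i j
    have e : ∀ f : Dual (ZMod 2) F,
        ((1 - chi (f (β ^ (i : ℕ)))) / 2) * ((1 - chi (f (β ^ (j : ℕ)))) / 2)
          = (1 - chi (f (β ^ (i : ℕ))) - chi (f (β ^ (j : ℕ)))
              + chi (f (β ^ (i : ℕ) + β ^ (j : ℕ)))) / 4 := by
      intro f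
      rw [map_add, chi_add]
      ring
    rw [Finset.sum_congr rfl fun f _ => e f]
    rw [← Finset.sum_div]
    rw [Finset.sum_add_distrib, Finset.sum_sub_distrib, Finset.sum_sub_distrib]
    rw [sum_chi_eq_zero _ (pow_ne_zero _ hβ0), sum_chi_eq_zero _ (pow_ne_zero _ hβ0), hD i j]
    rw [Finset.sum_const, card_univ, nsmul_eq_mul, mul_one, hcardD]
    ring
  calc ∑ f : Dual (ZMod 2) F, ((hammingNorm (L f) : ℚ)) ^ 2
      = ∑ f : Dual (ZMod 2) F, ∑ i : Fin n, ∑ j : Fin n,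
          ((1 - chi (f (β ^ (i : ℕ)))) / 2) * ((1 - chi (f (β ^ (j : ℕ)))) / 2) := by
        refine Finset.sum_congr rfl fun f _ => ?_
        rw [hnorm f, sq, Finset.sum_mul_sum]
    _ = ∑ i : Fin n, ∑ j : Fin n, ∑ f : Dual (ZMod 2) F,
          ((1 - chi (f (β ^ (i : ℕ)))) / 2) * ((1 - chi (f (β ^ (j : ℕ)))) / 2) := by
        rw [Finset.sum_comm]
        exact Finset.sum_congr rfl fun i _ => Finset.sum_comm
    _ = ∑ i : Fin n, ∑ j : Fin n,
          ((2 : ℚ) ^ (k : ℕ) + (if i = j then (2 : ℚ) ^ (k : ℕ) else 0)) / 4 := by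
        exact Finset.sum_congr rfl fun i _ => Finset.sum_congr rfl fun j _ => hinner i j
    _ = (n : ℚ) * ((n : ℚ) * ((2 : ℚ) ^ (k : ℕ) / 4) + (2 : ℚ) ^ (k : ℕ) / 4) := by
        have hj : ∀ i : Fin n, ∑ j : Fin n,
            ((2 : ℚ) ^ (k : ℕ) + (if i = j then (2 : ℚ) ^ (k : ℕ) else 0)) / 4
              = (n : ℚ) * ((2 : ℚ) ^ (k : ℕ) / 4) + (2 : ℚ) ^ (k : ℕ) / 4 := by
          intro i
          simp only [add_div, Finset.sum_add_distrib]
          congr 1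
          · rw [Finset.sum_const, card_univ, Fintype.card_fin, nsmul_eq_mul]
          · rw [← Finset.sum_div]
            rw [Finset.sum_ite_eq]
            simp
        rw [Finset.sum_congr rfl fun i _ => hj i]
        rw [Finset.sum_const, card_univ, Fintype.card_fin, nsmul_eq_mul]
    _ = (2 : ℚ) ^ ((k : ℤ) - 2) * n * (n + 1) := by
        have h2 : (2 : ℚ) ^ ((k : ℤ) - 2) = 2 ^ (k : ℕ) / 4 := by
          rw [zpow_sub₀ (by norm_num : (2 : ℚ) ≠ 0), zpow_natCast]
          norm_num
        rw [h2]
        ring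
end

section
/- Let p be a primitive polynomial of degree k ≥ 1 over 𝔽₂. If n ≥ 2k, then the PR code C(p, n) contains no codeword of Hamming weight 1; if moreover n ≥ 3k, then C(p, n) also contains no codeword of Hamming weight 2, so every nonzero codeword of C(p, n) has Hamming weight at least 3. -/
open Polynomial

lemma prSum (k n : ℕ) (p : Polynomial (ZMod 2)) (v : Fin n → ZMod 2)
    (m : Fin n) (i₀ : ℕ) (hi₀ : i₀ ∈ Finset.range (k + 1))
    (hz : ∀ i ∈ Finset.range (k + 1), i ≠ i₀ →
      v ⟨(m : ℕ) - i, lt_of_le_of_lt (Nat.sub_le _ _) m.isLt⟩ = 0) :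
    ∑ i ∈ Finset.range (k + 1),
      p.coeff i * v ⟨(m : ℕ) - i, lt_of_le_of_lt (Nat.sub_le _ _) m.isLt⟩
    = p.coeff i₀ * v ⟨(m : ℕ) - i₀, lt_of_le_of_lt (Nat.sub_le _ _) m.isLt⟩ := by
  refine Finset.sum_eq_single_of_mem i₀ hi₀ fun i hi hne => ?_
  rw [hz i hi hne, mul_zero]

/-- If `n ≥ 2k` then `C(p, n)` has no codeword of weight 1; if moreover
`n ≥ 3k` then it also has no codeword of weight 2, so every nonzero codeword has weight
at least 3. -/
theorem stmt15 (k n : ℕ) (hk : 1 ≤ k)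
    (p : Polynomial (ZMod 2)) (hp : IsPrimitivePoly k p) :
    (2 * k ≤ n → ∀ v ∈ PRCode k n p, hammingNorm v ≠ 1) ∧
    (3 * k ≤ n →
      (∀ v ∈ PRCode k n p, hammingNorm v ≠ 2) ∧
      (∀ v ∈ PRCode k n p, v ≠ 0 → 3 ≤ hammingNorm v)) := by
  obtain ⟨hdeg, hirr, hord⟩ := hp
  have hpk : p.coeff k ≠ 0 := by
    rw [← hdeg, coeff_natDegree]
    exact leadingCoeff_ne_zero.mpr hirr.ne_zero
  have hp0 : p.coeff 0 ≠ 0 := by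
    intro h0
    haveI : Fact (Irreducible p) := ⟨hirr⟩
    have hroot : AdjoinRoot.root p ≠ 0 := by
      have hpos : 0 < orderOf (AdjoinRoot.root p) := by
        rw [hord]
        have : 2 ≤ 2 ^ k := Nat.one_lt_two_pow (by omega)
        omega
      exact ((orderOf_pos_iff.mp hpos).isUnit).ne_zero
    obtain ⟨q, hq⟩ := (Polynomial.X_dvd_iff).mpr h0
    have hcase := hirr.isUnit_or_isUnit hq
    have hqu : IsUnit q := hcase.resolve_left Polynomial.not_isUnit_X
    have h1 : (AdjoinRoot.mk p) (X * q) = 0 := by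
      rw [← hq]; exact AdjoinRoot.mk_self
    rw [map_mul, AdjoinRoot.mk_X] at h1
    rcases mul_eq_zero.mp h1 with h | h
    · exact hroot h
    · exact (hqu.map (AdjoinRoot.mk p)).ne_zero h
  have w1 : 2 * k ≤ n → ∀ v ∈ PRCode k n p, hammingNorm v ≠ 1 := by
    intro hn v hv h1
    obtain ⟨j, hj⟩ := Finset.card_eq_one.mp h1
    have hmem : ∀ i : Fin n, v i ≠ 0 ↔ i = j := by
      intro i
      simpa using Finset.ext_iff.mp hj i
    have hvj : v j ≠ 0 := (hmem j).mpr rfl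
    have hz : ∀ i : Fin n, i ≠ j → v i = 0 := by
      intro i hi; by_contra h; exact hi ((hmem i).mp h)
    by_cases hcase : (j : ℕ) + k < n
    · set m : Fin n := ⟨(j : ℕ) + k, hcase⟩ with hm
      have hsum := hv m (by simp [hm])
      rw [prSum k n p v m k (by simp)
        (fun i hi hne => hz _ (fun he => by
          have := congrArg Fin.val he
          simp [hm] at this
          simp at hi
          omega))] at hsum
      have he : (⟨(m : ℕ) - k, lt_of_le_of_lt (Nat.sub_le _ _) m.isLt⟩ : Fin n) = j := by
        apply Fin.ext; simp [hm]
      rw [he] at hsum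
      rcases mul_eq_zero.mp hsum with h | h
      · exact hpk h
      · exact hvj h
    · have hjk : k ≤ (j : ℕ) := by have := j.isLt; omega
      have hsum := hv j hjk
      rw [prSum k n p v j 0 (by simp)
        (fun i hi hne => hz _ (fun he => by
          have := congrArg Fin.val he
          simp at this hi
          omega))] at hsum
      have he : (⟨(j : ℕ) - 0, lt_of_le_of_lt (Nat.sub_le _ _) j.isLt⟩ : Fin n) = j := by
        apply Fin.ext; simp
      rw [he] at hsum
      rcases mul_eq_zero.mp hsum with h | h
      · exact hp0 h
      · exact hvj h
  have w2 : 3 * k ≤ n → ∀ v ∈ PRCode k n p, hammingNorm v ≠ 2 := by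
    intro hn v hv h2
    obtain ⟨a, b, hab, hS⟩ := Finset.card_eq_two.mp h2
    have hmem : ∀ i : Fin n, v i ≠ 0 ↔ i = a ∨ i = b := by
      intro i
      simpa using Finset.ext_iff.mp hS i
    -- order a b by value
    obtain ⟨j, l, hjl, hvj, hvl, hz⟩ :
        ∃ j l : Fin n, (j : ℕ) < (l : ℕ) ∧ v j ≠ 0 ∧ v l ≠ 0 ∧
          (∀ i : Fin n, i ≠ j → i ≠ l → v i = 0) := by
      have hva : v a ≠ 0 := (hmem a).mpr (Or.inl rfl)
      have hvb : v b ≠ 0 := (hmem b).mpr (Or.inr rfl)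
      have hz0 : ∀ i : Fin n, i ≠ a → i ≠ b → v i = 0 := by
        intro i h1 h2; by_contra h
        rcases (hmem i).mp h with h' | h' <;> [exact h1 h'; exact h2 h']
      rcases lt_or_gt_of_ne (fun h : (a : ℕ) = (b : ℕ) => hab (Fin.ext h)) with h | h
      · exact ⟨a, b, h, hva, hvb, hz0⟩
      · exact ⟨b, a, h, hvb, hva, fun i h1 h2 => hz0 i h2 h1⟩
    -- step (a): j < k
    have hjk : (j : ℕ) < k := by
      by_contra hjge
      push_neg at hjge
      have hsum := hv j hjge
      rw [prSum k n p v j 0 (by simp)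
        (fun i hi hne => hz _
          (fun he => by
            have := congrArg Fin.val he
            simp at this hi
            omega)
          (fun he => by
            have := congrArg Fin.val he
            simp at this hi
            omega))] at hsum
      have he : (⟨(j : ℕ) - 0, lt_of_le_of_lt (Nat.sub_le _ _) j.isLt⟩ : Fin n) = j := by
        apply Fin.ext; simp
      rw [he] at hsum
      rcases mul_eq_zero.mp hsum with h | h
      · exact hp0 h
      · exact hvj h
    -- step (b): n ≤ l + k
    have hlk : n ≤ (l : ℕ) + k := by
      by_contra hlt
      push_neg at hlt
      set m : Fin n := ⟨(l : ℕ) + k, hlt⟩ with hm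
      have hsum := hv m (by simp [hm])
      rw [prSum k n p v m k (by simp)
        (fun i hi hne => hz _
          (fun he => by
            have := congrArg Fin.val he
            simp [hm] at this hi
            omega)
          (fun he => by
            have := congrArg Fin.val he
            simp [hm] at this hi
            omega))] at hsum
      have he : (⟨(m : ℕ) - k, lt_of_le_of_lt (Nat.sub_le _ _) m.isLt⟩ : Fin n) = l := by
        apply Fin.ext; simp [hm]
      rw [he] at hsum
      rcases mul_eq_zero.mp hsum with h | h
      · exact hpk h
      · exact hvl h
    -- step (c): contradiction using m = j + k
    have hl2k : 2 * k ≤ (l : ℕ) := by have := l.isLt; omega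
    have hjkn : (j : ℕ) + k < n := by have := l.isLt; omega
    set m : Fin n := ⟨(j : ℕ) + k, hjkn⟩ with hm
    have hsum := hv m (by simp [hm])
    rw [prSum k n p v m k (by simp)
      (fun i hi hne => hz _
        (fun he => by
          have := congrArg Fin.val he
          simp [hm] at this hi
          omega)
        (fun he => by
          have := congrArg Fin.val he
          simp [hm] at this hi
          omega))] at hsum
    have he : (⟨(m : ℕ) - k, lt_of_le_of_lt (Nat.sub_le _ _) m.isLt⟩ : Fin n) = j := by
      apply Fin.ext; simp [hm]
    rw [he] at hsum
    rcases mul_eq_zero.mp hsum with h | h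
    · exact hpk h
    · exact hvj h
  refine ⟨w1, fun hn => ⟨w2 hn, fun v hv hv0 => ?_⟩⟩
  have h0 : hammingNorm v ≠ 0 := by
    simpa [hammingNorm_eq_zero] using hv0
  have h1 := w1 (by omega) v hv
  have h2 := w2 hn v hv
  omega
end

section
/- Let p be a primitive polynomial of degree k ≥ 2 over 𝔽₂ and for each integer t ≥ 1 let N_t denote the number of polynomials q ∈ 𝔽₂[x] with constant term q(0) = 1, degree at most 2^k − 2, exactly t nonzero coefficients, and divisible by p. Then N_1 = N_2 = 0 and, for every t ≥ 3, (t − 1)(t − 2) · N_t = (t − 2) · C(2^k − 2, t − 2) − (t − 2) · N_{t−1} − (t − 1) · (2^k − t + 1) · N_{t−2}, where C(a, b) denotes the binomial coefficient. -/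
open Finset Polynomial


open Finset Polynomial

section Core

variable (F : Type*) [Field F] [Fintype F] [DecidableEq F]

/-- zero-sum subsets of `F \ {0}` of size `t` -/
private def zsF (t : ℕ) : Finset (Finset F) :=
  Finset.univ.filter fun S => (0:F) ∉ S ∧ S.card = t ∧ ∑ x ∈ S, x = 0

/-- those containing 1 -/
private def asF (t : ℕ) : Finset (Finset F) :=
  (zsF F t).filter fun S => (1:F) ∈ S

private def UF : Finset F := (Finset.univ.erase 1).erase 0

variable {F}

private lemma mem_zsF {t : ℕ} {S : Finset F} :
    S ∈ zsF F t ↔ (0:F) ∉ S ∧ S.card = t ∧ ∑ x ∈ S, x = 0 := by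
  simp [zsF]

private lemma mem_asF {t : ℕ} {S : Finset F} :
    S ∈ asF F t ↔ (1:F) ∈ S ∧ (0:F) ∉ S ∧ S.card = t ∧ ∑ x ∈ S, x = 0 := by
  simp [asF, mem_zsF]; tauto

private lemma mem_UF {x : F} : x ∈ UF F ↔ x ≠ 0 ∧ x ≠ 1 := by
  simp [UF]

private lemma subset_UF {A : Finset F} : A ⊆ UF F ↔ (0:F) ∉ A ∧ (1:F) ∉ A := by
  constructor
  · intro h
    exact ⟨fun h0 => ((mem_UF.1 (h h0)).1 rfl), fun h1 => ((mem_UF.1 (h h1)).2 rfl)⟩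
  · rintro ⟨h0, h1⟩ y hy
    exact mem_UF.2 ⟨fun hh => h0 (hh ▸ hy), fun hh => h1 (hh ▸ hy)⟩

private lemma card_UF : (UF F).card = Fintype.card F - 2 := by
  rw [UF, card_erase_of_mem (mem_erase.2 ⟨zero_ne_one, mem_univ _⟩),
    card_erase_of_mem (mem_univ _), card_univ]
  omega

private lemma asF_card_eq_zero {m : ℕ} (hm : Fintype.card F - 1 < m) :
    (asF F m).card = 0 := by
  rw [Finset.card_eq_zero, Finset.eq_empty_iff_forall_notMem]
  intro S hS
  rw [mem_asF] at hS
  obtain ⟨h1, h0, hc, -⟩ := hS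
  have hsub : S ⊆ Finset.univ.erase (0:F) := fun y hy =>
    mem_erase.2 ⟨fun hh => h0 (hh ▸ hy), mem_univ _⟩
  have := Finset.card_le_card hsub
  rw [hc, card_erase_of_mem (mem_univ _), card_univ] at this
  omega

end Core

section CoreB
variable {F : Type*} [Field F] [Fintype F] [DecidableEq F]

private lemma scale_card {t : ℕ} {x : F} (hx : x ≠ 0) :
    ((zsF F t).filter fun S => x ∈ S).card = (asF F t).card := by
  apply Finset.card_nbij' (i := fun S => S.image (fun y => x⁻¹ * y))
    (j := fun S => S.image (fun y => x * y))
  · intro S hS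
    rw [mem_coe, mem_filter, mem_zsF] at hS
    dsimp only
    obtain ⟨⟨h0, hc, hs⟩, hxS⟩ := hS
    rw [mem_coe, mem_asF]
    refine ⟨mem_image.2 ⟨x, hxS, inv_mul_cancel₀ hx⟩, ?_, ?_, ?_⟩
    · intro h
      obtain ⟨y, hy, hxy⟩ := mem_image.1 h
      rcases mul_eq_zero.1 hxy with h' | h'
      · exact inv_ne_zero hx h'
      · exact h0 (h' ▸ hy)
    · rw [Finset.card_image_of_injective _ (mul_right_injective₀ (inv_ne_zero hx))]
      exact hc
    · rw [Finset.sum_image (fun a _ b _ h => mul_left_cancel₀ (inv_ne_zero hx) h),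
        ← Finset.mul_sum, hs, mul_zero]
  · intro S hS
    rw [mem_coe, mem_asF] at hS
    dsimp only
    obtain ⟨h1, h0, hc, hs⟩ := hS
    rw [mem_coe, mem_filter, mem_zsF]
    refine ⟨⟨?_, ?_, ?_⟩, mem_image.2 ⟨1, h1, mul_one x⟩⟩
    · intro h
      obtain ⟨y, hy, hxy⟩ := mem_image.1 h
      rcases mul_eq_zero.1 hxy with h' | h'
      · exact hx h'
      · exact h0 (h' ▸ hy)
    · rw [Finset.card_image_of_injective _ (mul_right_injective₀ hx)]
      exact hc
    · rw [Finset.sum_image (fun a _ b _ h => mul_left_cancel₀ hx h),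
        ← Finset.mul_sum, hs, mul_zero]
  · intro S _
    dsimp only
    rw [Finset.image_image]
    have : ∀ y : F, ((fun y => x * y) ∘ fun y => x⁻¹ * y) y = y := fun y =>
      mul_inv_cancel_left₀ hx y
    rw [funext this, Finset.image_id']
  · intro S _
    dsimp only
    rw [Finset.image_image]
    have : ∀ y : F, ((fun y => x⁻¹ * y) ∘ fun y => x * y) y = y := fun y =>
      inv_mul_cancel_left₀ hx y
    rw [funext this, Finset.image_id']

private lemma double_count (t : ℕ) :
    t * (zsF F t).card = (Fintype.card F - 1) * (asF F t).card := by
  have step1 : ∀ S ∈ zsF F t, S.card =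
      ((Finset.univ.erase (0:F)).filter fun x => x ∈ S).card := by
    intro S hS
    rw [mem_zsF] at hS
    congr 1
    ext y
    constructor
    · intro h
      refine mem_filter.2 ⟨mem_erase.2 ⟨?_, mem_univ y⟩, h⟩
      rintro rfl
      exact hS.1 h
    · intro h
      exact (mem_filter.1 h).2
  calc t * (zsF F t).card = ∑ S ∈ zsF F t, S.card := by
        rw [Finset.sum_congr rfl fun S hS => (mem_zsF.1 hS).2.1, Finset.sum_const,
          smul_eq_mul, mul_comm]
    _ = ∑ S ∈ zsF F t, ∑ x ∈ Finset.univ.erase (0:F), if x ∈ S then 1 else 0 := by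
        refine Finset.sum_congr rfl fun S hS => ?_
        rw [step1 S hS, Finset.card_filter]
    _ = ∑ x ∈ Finset.univ.erase (0:F), ∑ S ∈ zsF F t, if x ∈ S then 1 else 0 :=
        Finset.sum_comm
    _ = ∑ x ∈ Finset.univ.erase (0:F), ((zsF F t).filter fun S => x ∈ S).card := by
        refine Finset.sum_congr rfl fun x _ => ?_
        rw [Finset.card_filter]
    _ = ∑ x ∈ Finset.univ.erase (0:F), (asF F t).card := by
        refine Finset.sum_congr rfl fun x hx => scale_card (mem_erase.1 hx).1
    _ = (Fintype.card F - 1) * (asF F t).card := by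
        rw [Finset.sum_const, card_erase_of_mem (mem_univ _), card_univ, smul_eq_mul]

end CoreB

section CoreC
variable {F : Type*} [Field F] [Fintype F] [DecidableEq F]

private lemma addeq (h2 : ∀ x : F, x + x = 0) {a b : F} (h : a + b = 0) : a = b := by
  have hb := h2 b
  have : a + b = b + b := by rw [h, hb]
  exact add_right_cancel this

private lemma LD1 (h2 : ∀ x : F, x + x = 0) (r : ℕ) :
    (((UF F).powersetCard r).filter fun A => ∑ x ∈ A, x = 1).card
      = (asF F (r+1)).card := by
  apply Finset.card_nbij' (i := fun A => insert (1:F) A) (j := fun S => S.erase 1)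
  · intro A hA
    rw [mem_coe, mem_filter, mem_powersetCard] at hA
    dsimp only
    obtain ⟨⟨hAU, hAc⟩, hAs⟩ := hA
    obtain ⟨h0A, h1A⟩ := subset_UF.1 hAU
    rw [mem_coe, mem_asF]
    refine ⟨mem_insert_self _ _, ?_, ?_, ?_⟩
    · intro h
      rcases mem_insert.1 h with h | h
      · exact zero_ne_one h
      · exact h0A h
    · rw [card_insert_of_notMem h1A, hAc]
    · rw [Finset.sum_insert h1A, hAs]
      exact h2 1
  · intro S hS
    rw [mem_coe, mem_asF] at hS
    dsimp only
    obtain ⟨h1, h0, hc, hs⟩ := hS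
    rw [mem_coe, mem_filter, mem_powersetCard]
    refine ⟨⟨?_, ?_⟩, ?_⟩
    · intro y hy
      rw [mem_UF]
      refine ⟨?_, (mem_erase.1 hy).1⟩
      rintro rfl
      exact h0 (mem_of_mem_erase hy)
    · rw [card_erase_of_mem h1, hc]
      omega
    · have := Finset.add_sum_erase S (fun x => x) h1
      rw [hs] at this
      exact (addeq h2 this).symm
  · intro A hA
    rw [mem_coe, mem_filter, mem_powersetCard] at hA
    dsimp only
    exact Finset.erase_insert (subset_UF.1 hA.1.1).2
  · intro S hS
    rw [mem_coe, mem_asF] at hS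
    dsimp only
    exact Finset.insert_erase hS.1

private lemma LD2 (r : ℕ) :
    (((UF F).powersetCard r).filter fun A => ∑ x ∈ A, x = 0)
      = (zsF F r).filter fun S => (1:F) ∉ S := by
  ext A
  rw [mem_filter, mem_powersetCard, mem_filter, mem_zsF, subset_UF]
  tauto

private lemma LD3 (h2 : ∀ x : F, x + x = 0) (r : ℕ) :
    (((UF F).powersetCard r).filter fun A => 1 + ∑ x ∈ A, x ∈ A).card
      = (asF F r).card * (Fintype.card F - 2 - (r-1)) := by
  have hmaps : ∀ A ∈ ((UF F).powersetCard r).filter fun A => 1 + ∑ x ∈ A, x ∈ A,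
      insert (1:F) (A.erase (1 + ∑ x ∈ A, x)) ∈ asF F r := by
    intro A hA
    rw [mem_filter, mem_powersetCard] at hA
    obtain ⟨⟨hAU, hAc⟩, hsA⟩ := hA
    obtain ⟨h0A, h1A⟩ := subset_UF.1 hAU
    set s := 1 + ∑ x ∈ A, x with hsdef
    have h1e : (1:F) ∉ A.erase s := fun h => h1A (mem_of_mem_erase h)
    rw [mem_asF]
    refine ⟨mem_insert_self _ _, ?_, ?_, ?_⟩
    · intro h
      rcases mem_insert.1 h with h | h
      · exact zero_ne_one h
      · exact h0A (mem_of_mem_erase h)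
    · rw [card_insert_of_notMem h1e, card_erase_of_mem hsA, hAc]
      have : 1 ≤ r := hAc ▸ Finset.card_pos.2 ⟨s, hsA⟩
      omega
    · rw [Finset.sum_insert h1e]
      have he2 := Finset.add_sum_erase A (fun x => x) hsA
      linear_combination he2 - hsdef
  rw [Finset.card_eq_sum_card_fiberwise hmaps]
  have hfib : ∀ S ∈ asF F r,
      ((((UF F).powersetCard r).filter fun A => 1 + ∑ x ∈ A, x ∈ A).filter
        fun A => insert (1:F) (A.erase (1 + ∑ x ∈ A, x)) = S).card
      = Fintype.card F - 2 - (r-1) := by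
    intro S hS
    rw [mem_asF] at hS
    obtain ⟨h1S, h0S, hcS, hsS⟩ := hS
    have herS : S.erase 1 ⊆ UF F := by
      intro y hy
      rw [mem_UF]
      refine ⟨?_, (mem_erase.1 hy).1⟩
      rintro rfl
      exact h0S (mem_of_mem_erase hy)
    have hsum_er : ∑ x ∈ S.erase 1, x = 1 := by
      have := Finset.add_sum_erase S (fun x => x) h1S
      rw [hsS] at this
      exact (addeq h2 this).symm
    have hcard_er : (S.erase 1).card = r - 1 := by
      rw [card_erase_of_mem h1S, hcS]
    have hr1 : 1 ≤ r := hcS ▸ Finset.card_pos.2 ⟨1, h1S⟩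
    have key : ((((UF F).powersetCard r).filter fun A => 1 + ∑ x ∈ A, x ∈ A).filter
        fun A => insert (1:F) (A.erase (1 + ∑ x ∈ A, x)) = S).card
        = (UF F \ S).card := by
      apply Finset.card_nbij' (i := fun A => 1 + ∑ x ∈ A, x)
        (j := fun s => insert s (S.erase 1))
      · intro A hA
        rw [mem_coe, mem_filter, mem_filter, mem_powersetCard] at hA
        dsimp only
        obtain ⟨⟨⟨hAU, hAc⟩, hsA⟩, hfS⟩ := hA
        rw [mem_coe, Finset.mem_sdiff]
        refine ⟨hAU hsA, ?_⟩
        intro hmem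
        rw [← hfS] at hmem
        rcases mem_insert.1 hmem with h | h
        · exact (mem_UF.1 (hAU hsA)).2 h
        · exact (Finset.notMem_erase _ _) h
      · intro s hs
        rw [mem_coe, Finset.mem_sdiff] at hs
        dsimp only
        obtain ⟨hsU, hsS2⟩ := hs
        have hsnotin : s ∉ S.erase 1 := fun h => hsS2 (mem_of_mem_erase h)
        have hsum : ∑ x ∈ insert s (S.erase 1), x = s + 1 := by
          rw [Finset.sum_insert hsnotin, hsum_er]
        have hkey : 1 + ∑ x ∈ insert s (S.erase 1), x = s := by
          rw [hsum]
          linear_combination h2 1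
        rw [mem_coe, mem_filter, mem_filter, mem_powersetCard]
        refine ⟨⟨⟨?_, ?_⟩, ?_⟩, ?_⟩
        · intro y hy
          rcases mem_insert.1 hy with h | h
          · exact h ▸ hsU
          · exact herS h
        · rw [card_insert_of_notMem hsnotin, hcard_er]
          omega
        · rw [hkey]
          exact mem_insert_self _ _
        · rw [hkey, Finset.erase_insert hsnotin]
          exact Finset.insert_erase h1S
      · intro A hA
        rw [mem_coe, mem_filter, mem_filter, mem_powersetCard] at hA
        dsimp only
        obtain ⟨⟨⟨hAU, hAc⟩, hsA⟩, hfS⟩ := hA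
        rw [← hfS, Finset.erase_insert]
        · exact Finset.insert_erase hsA
        · intro h
          exact (subset_UF.1 hAU).2 (mem_of_mem_erase h)
      · intro s hs
        rw [mem_coe, Finset.mem_sdiff] at hs
        dsimp only
        have hsnotin : s ∉ S.erase 1 := fun h => hs.2 (mem_of_mem_erase h)
        rw [Finset.sum_insert hsnotin, hsum_er]
        linear_combination h2 1
    rw [key]
    have : UF F \ S = UF F \ (S.erase 1) := by
      ext y
      simp only [Finset.mem_sdiff, mem_erase]
      constructor
      · intro ⟨hy, hy2⟩
        exact ⟨hy, fun h => hy2 h.2⟩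
      · intro ⟨hy, hy2⟩
        refine ⟨hy, fun h => ?_⟩
        exact hy2 ⟨(mem_UF.1 hy).2, h⟩
    rw [this, Finset.card_sdiff_of_subset herS, card_UF, hcard_er]
  rw [Finset.sum_congr rfl hfib, Finset.sum_const, smul_eq_mul]

end CoreC

section CoreD
variable {F : Type*} [Field F] [Fintype F] [DecidableEq F]

private lemma LD4 (h2 : ∀ x : F, x + x = 0) (r : ℕ) :
    (((UF F).powersetCard r).filter fun A =>
        ∑ x ∈ A, x ≠ 1 ∧ ∑ x ∈ A, x ≠ 0 ∧ 1 + ∑ x ∈ A, x ∉ A).card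
      = (asF F (r+2)).card * (r+1) := by
  have hmaps : ∀ A ∈ ((UF F).powersetCard r).filter fun A =>
        ∑ x ∈ A, x ≠ 1 ∧ ∑ x ∈ A, x ≠ 0 ∧ 1 + ∑ x ∈ A, x ∉ A,
      insert (1:F) (insert (1 + ∑ x ∈ A, x) A) ∈ asF F (r+2) := by
    intro A hA
    rw [mem_filter, mem_powersetCard] at hA
    obtain ⟨⟨hAU, hAc⟩, hne1, hne0, hnotin⟩ := hA
    obtain ⟨h0A, h1A⟩ := subset_UF.1 hAU
    set s := 1 + ∑ x ∈ A, x with hsdef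
    have hs0 : s ≠ 0 := fun h => hne1 (addeq h2 (hsdef ▸ h)).symm
    have hs1 : s ≠ 1 := by
      intro h
      apply hne0
      have : (1:F) + ∑ x ∈ A, x = 1 + 0 := by rw [add_zero]; exact hsdef ▸ h
      exact add_left_cancel this
    have h1i : (1:F) ∉ insert s A := by
      intro h
      rcases mem_insert.1 h with h | h
      · exact hs1 h.symm
      · exact h1A h
    rw [mem_asF]
    refine ⟨mem_insert_self _ _, ?_, ?_, ?_⟩
    · intro h
      rcases mem_insert.1 h with h | h
      · exact zero_ne_one h
      · rcases mem_insert.1 h with h | h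
        · exact hs0 h.symm
        · exact h0A h
    · rw [card_insert_of_notMem h1i, card_insert_of_notMem hnotin, hAc]
    · rw [Finset.sum_insert h1i, Finset.sum_insert hnotin]
      linear_combination h2 1 + h2 (∑ x ∈ A, x)
  rw [Finset.card_eq_sum_card_fiberwise hmaps]
  have hfib : ∀ S ∈ asF F (r+2),
      ((((UF F).powersetCard r).filter fun A =>
          ∑ x ∈ A, x ≠ 1 ∧ ∑ x ∈ A, x ≠ 0 ∧ 1 + ∑ x ∈ A, x ∉ A).filter
        fun A => insert (1:F) (insert (1 + ∑ x ∈ A, x) A) = S).card = r + 1 := by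
    intro S hS
    rw [mem_asF] at hS
    obtain ⟨h1S, h0S, hcS, hsS⟩ := hS
    have hsum_er : ∑ x ∈ S.erase 1, x = 1 := by
      have := Finset.add_sum_erase S (fun x => x) h1S
      rw [hsS] at this
      exact (addeq h2 this).symm
    have key : ((((UF F).powersetCard r).filter fun A =>
          ∑ x ∈ A, x ≠ 1 ∧ ∑ x ∈ A, x ≠ 0 ∧ 1 + ∑ x ∈ A, x ∉ A).filter
        fun A => insert (1:F) (insert (1 + ∑ x ∈ A, x) A) = S).card
        = (S.erase 1).card := by
      apply Finset.card_nbij' (i := fun A => 1 + ∑ x ∈ A, x)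
        (j := fun s => (S.erase 1).erase s)
      · intro A hA
        rw [mem_coe, mem_filter, mem_filter, mem_powersetCard] at hA
        dsimp only
        obtain ⟨⟨⟨hAU, hAc⟩, hne1, hne0, hnotin⟩, hfS⟩ := hA
        rw [mem_coe, mem_erase]
        constructor
        · intro h
          apply hne0
          have : (1:F) + ∑ x ∈ A, x = 1 + 0 := by rw [add_zero]; exact h
          exact add_left_cancel this
        · rw [← hfS]
          exact mem_insert.2 (Or.inr (mem_insert_self _ _))
      · intro s hs
        rw [mem_coe] at hs
        dsimp only
        have hs1 : s ≠ 1 := (mem_erase.1 hs).1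
        have hsS2 : s ∈ S := mem_of_mem_erase hs
        have hs0 : s ≠ 0 := fun h => h0S (h ▸ hsS2)
        set A := (S.erase 1).erase s with hAdef
        have h1A : (1:F) ∉ A := fun h => Finset.notMem_erase 1 S (mem_of_mem_erase h)
        have h0A : (0:F) ∉ A := fun h => h0S (mem_of_mem_erase (mem_of_mem_erase h))
        have hsA : s ∉ A := Finset.notMem_erase _ _
        have hsumA : s + ∑ x ∈ A, x = 1 := by
          have := Finset.add_sum_erase (S.erase 1) (fun x => x) hs
          rw [hsum_er] at this
          exact this
        have hkey : 1 + ∑ x ∈ A, x = s := by linear_combination -hsumA + h2 (∑ x ∈ A, x)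
        rw [mem_coe, mem_filter, mem_filter, mem_powersetCard]
        refine ⟨⟨⟨?_, ?_⟩, ?_, ?_, ?_⟩, ?_⟩
        · intro y hy
          rw [mem_UF]
          refine ⟨fun h => h0A (h ▸ hy), fun h => h1A (h ▸ hy)⟩
        · rw [hAdef, card_erase_of_mem hs, card_erase_of_mem h1S, hcS]
          omega
        · intro h
          apply hs0
          have := hkey
          rw [h] at this
          linear_combination - this + h2 1
        · intro h
          apply hs1
          rw [h, add_zero] at hkey
          exact hkey.symm
        · rw [hkey]; exact hsA
        · rw [hkey, hAdef, Finset.insert_erase hs, Finset.insert_erase h1S]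
      · intro A hA
        rw [mem_coe, mem_filter, mem_filter, mem_powersetCard] at hA
        dsimp only
        obtain ⟨⟨⟨hAU, hAc⟩, hne1, hne0, hnotin⟩, hfS⟩ := hA
        obtain ⟨h0A, h1A⟩ := subset_UF.1 hAU
        set s := 1 + ∑ x ∈ A, x with hsdef
        have hs1 : s ≠ 1 := by
          intro h
          apply hne0
          have : (1:F) + ∑ x ∈ A, x = 1 + 0 := by rw [add_zero]; exact hsdef ▸ h
          exact add_left_cancel this
        have h1i : (1:F) ∉ insert s A := by
          intro h
          rcases mem_insert.1 h with h | h
          · exact hs1 h.symm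
          · exact h1A h
        rw [← hfS, Finset.erase_insert h1i, Finset.erase_insert hnotin]
      · intro s hs
        rw [mem_coe] at hs
        dsimp only
        have hs1 : s ≠ 1 := (mem_erase.1 hs).1
        have hsumA : s + ∑ x ∈ (S.erase 1).erase s, x = 1 := by
          have := Finset.add_sum_erase (S.erase 1) (fun x => x) hs
          rw [hsum_er] at this
          exact this
        linear_combination -hsumA + h2 (∑ x ∈ (S.erase 1).erase s, x)
    rw [key, card_erase_of_mem h1S, hcS]
    omega

  rw [Finset.sum_congr rfl hfib, Finset.sum_const, smul_eq_mul]

private lemma Lpart (h2 : ∀ x : F, x + x = 0) (r : ℕ) :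
    ((UF F).powersetCard r).card
      = (((UF F).powersetCard r).filter fun A => ∑ x ∈ A, x = 1).card
        + (((UF F).powersetCard r).filter fun A => ∑ x ∈ A, x = 0).card
        + (((UF F).powersetCard r).filter fun A => 1 + ∑ x ∈ A, x ∈ A).card
        + (((UF F).powersetCard r).filter fun A =>
            ∑ x ∈ A, x ≠ 1 ∧ ∑ x ∈ A, x ≠ 0 ∧ 1 + ∑ x ∈ A, x ∉ A).card := by
  classical
  set P := (UF F).powersetCard r with hP
  have e1 : P.card = (P.filter fun A => ∑ x ∈ A, x = 1).card
      + (P.filter fun A => ¬ (∑ x ∈ A, x = 1)).card :=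
    (Finset.card_filter_add_card_filter_not _).symm
  have e2 : (P.filter fun A => ¬ (∑ x ∈ A, x = 1)).card
      = ((P.filter fun A => ¬ (∑ x ∈ A, x = 1)).filter fun A => ∑ x ∈ A, x = 0).card
        + ((P.filter fun A => ¬ (∑ x ∈ A, x = 1)).filter fun A => ¬ (∑ x ∈ A, x = 0)).card :=
    (Finset.card_filter_add_card_filter_not _).symm
  have e3 : ((P.filter fun A => ¬ (∑ x ∈ A, x = 1)).filter fun A => ¬ (∑ x ∈ A, x = 0)).card
      = (((P.filter fun A => ¬ (∑ x ∈ A, x = 1)).filter fun A => ¬ (∑ x ∈ A, x = 0)).filter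
          fun A => 1 + ∑ x ∈ A, x ∈ A).card
        + (((P.filter fun A => ¬ (∑ x ∈ A, x = 1)).filter fun A => ¬ (∑ x ∈ A, x = 0)).filter
          fun A => ¬ (1 + ∑ x ∈ A, x ∈ A)).card :=
    (Finset.card_filter_add_card_filter_not _).symm
  have he0 : (P.filter fun A => ¬ (∑ x ∈ A, x = 1)).filter (fun A => ∑ x ∈ A, x = 0)
      = P.filter fun A => ∑ x ∈ A, x = 0 := by
    rw [Finset.filter_filter]
    refine Finset.filter_congr fun A hA => ?_
    constructor
    · exact fun h => h.2
    · intro h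
      refine ⟨fun h1 => ?_, h⟩
      rw [h] at h1
      exact zero_ne_one h1
  have hmem3 : ∀ A ∈ P, 1 + ∑ x ∈ A, x ∈ A →
      ¬ (∑ x ∈ A, x = 1) ∧ ¬ (∑ x ∈ A, x = 0) := by
    intro A hA hin
    rw [hP, mem_powersetCard] at hA
    obtain ⟨h0A, h1A⟩ := subset_UF.1 hA.1
    constructor
    · intro h
      rw [h] at hin
      have : (1:F) + 1 = 0 := h2 1
      rw [this] at hin
      exact h0A hin
    · intro h
      rw [h, add_zero] at hin
      exact h1A hin
  have he3 : ((P.filter fun A => ¬ (∑ x ∈ A, x = 1)).filter fun A => ¬ (∑ x ∈ A, x = 0)).filter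
        (fun A => 1 + ∑ x ∈ A, x ∈ A)
      = P.filter fun A => 1 + ∑ x ∈ A, x ∈ A := by
    rw [Finset.filter_filter, Finset.filter_filter]
    refine Finset.filter_congr fun A hA => ?_
    constructor
    · exact fun h => h.2.2
    · intro h
      obtain ⟨ha, hb⟩ := hmem3 A hA h
      exact ⟨ha, hb, h⟩
  have he4 : ((P.filter fun A => ¬ (∑ x ∈ A, x = 1)).filter fun A => ¬ (∑ x ∈ A, x = 0)).filter
        (fun A => ¬ (1 + ∑ x ∈ A, x ∈ A))
      = P.filter fun A => ∑ x ∈ A, x ≠ 1 ∧ ∑ x ∈ A, x ≠ 0 ∧ 1 + ∑ x ∈ A, x ∉ A := by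
    rw [Finset.filter_filter, Finset.filter_filter]
  rw [e1, e2, e3, he0, he3, he4]
  ring

private lemma core_id (h2 : ∀ x : F, x + x = 0) (r : ℕ) :
    r * Nat.choose (Fintype.card F - 2) r + r * (asF F r).card
      = r * (asF F (r+1)).card + (Fintype.card F - 1) * (asF F r).card
        + r * ((asF F r).card * (Fintype.card F - 2 - (r-1)))
        + r * ((asF F (r+2)).card * (r+1)) := by
  have hP : ((UF F).powersetCard r).card = Nat.choose (Fintype.card F - 2) r := by
    rw [Finset.card_powersetCard, card_UF]
  have hsplit := Lpart h2 r
  have hd1 := LD1 h2 r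
  have hd3 := LD3 h2 r
  have hd4 := LD4 h2 r
  have hz : (zsF F r).card = (asF F r).card
      + (((UF F).powersetCard r).filter fun A => ∑ x ∈ A, x = 0).card := by
    rw [LD2]
    have := Finset.card_filter_add_card_filter_not
      (s := zsF F r) (p := fun S => (1:F) ∈ S)
    rw [← this]
    rfl
  have hL1 := double_count (F := F) r
  zify at hP hsplit hd1 hd3 hd4 hz hL1 ⊢
  linear_combination (r:ℤ) * hsplit - r * hP + r * hd1 + r * hd3 + r * hd4 + hL1 - r * hz
end CoreD

private lemma zmod2_eq : ∀ x : ZMod 2, x = 0 ∨ x = 1 := by decide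

private lemma coeff_one_of_mem {q : (ZMod 2)[X]} {i : ℕ} (h : i ∈ q.support) :
    q.coeff i = 1 := by
  rcases zmod2_eq (q.coeff i) with h0 | h1
  · exact absurd h0 (Polynomial.mem_support_iff.1 h)
  · exact h1

private lemma eq_of_support_eq {q1 q2 : (ZMod 2)[X]} (h : q1.support = q2.support) :
    q1 = q2 := by
  ext i
  by_cases hi : i ∈ q1.support
  · rw [coeff_one_of_mem hi, coeff_one_of_mem (h ▸ hi)]
  · have hi2 : i ∉ q2.support := h ▸ hi
    rw [Polynomial.notMem_support_iff.1 hi, Polynomial.notMem_support_iff.1 hi2]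

private lemma aeval_eq_sum_support {A : Type*} [CommRing A] [Algebra (ZMod 2) A]
    (q : (ZMod 2)[X]) (x : A) : Polynomial.aeval x q = ∑ i ∈ q.support, x ^ i := by
  rw [Polynomial.aeval_def, Polynomial.eval₂_eq_sum, Polynomial.sum]
  refine Finset.sum_congr rfl fun i hi => ?_
  rw [coeff_one_of_mem hi, map_one, one_mul]

private lemma support_sum_X_pow (T : Finset ℕ) :
    (∑ i ∈ T, (Polynomial.X : (ZMod 2)[X]) ^ i).support = T := by
  ext j
  rw [Polynomial.mem_support_iff, Polynomial.finset_sum_coeff]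
  simp only [Polynomial.coeff_X_pow]
  rw [Finset.sum_ite_eq T j (fun _ => (1 : ZMod 2))]
  split_ifs with h <;> simp [h]


/-- Recurrence for the number `N_t` of `t`-nomial multiples (with constant
term 1 and degree at most `2^k - 2`) of a primitive polynomial of degree `k ≥ 2`:
`N₁ = N₂ = 0` and for `t ≥ 3`,
`(t-1)(t-2)·N_t = (t-2)·C(2^k-2, t-2) - (t-2)·N_{t-1} - (t-1)·(2^k - t + 1)·N_{t-2}`. -/
theorem stmt16 (k : ℕ) (hk : 2 ≤ k)
    (p : Polynomial (ZMod 2)) (hp : IsPrimitivePoly k p)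
    (N : ℕ → ℕ)
    (hN : ∀ t : ℕ, N t = {q : Polynomial (ZMod 2) |
        q.coeff 0 = 1 ∧ q.natDegree ≤ 2 ^ k - 2 ∧ q.support.card = t ∧ p ∣ q}.ncard) :
    N 1 = 0 ∧ N 2 = 0 ∧
    ∀ t : ℕ, 3 ≤ t →
      ((t : ℤ) - 1) * ((t : ℤ) - 2) * (N t : ℤ)
        = ((t : ℤ) - 2) * (Nat.choose (2 ^ k - 2) (t - 2) : ℤ)
          - ((t : ℤ) - 2) * (N (t - 1) : ℤ)
          - ((t : ℤ) - 1) * ((2 : ℤ) ^ k - (t : ℤ) + 1) * (N (t - 2) : ℤ) := by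

  classical
  obtain ⟨hdeg, hirr, hord⟩ := hp
  haveI : Fact (Irreducible p) := ⟨hirr⟩
  have hpne : p ≠ 0 := hirr.ne_zero
  haveI : Module.Finite (ZMod 2) (AdjoinRoot p) := (AdjoinRoot.powerBasis hpne).finite
  haveI : Finite (AdjoinRoot p) := Module.finite_of_finite (ZMod 2)
  letI : Fintype (AdjoinRoot p) := Fintype.ofFinite (AdjoinRoot p)
  letI : DecidableEq (AdjoinRoot p) := Classical.decEq (AdjoinRoot p)
  obtain ⟨c, hc⟩ : ∃ c, 2 ^ k = c := ⟨_, rfl⟩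
  have hc4 : 4 ≤ c := by
    rw [← hc]
    calc (4:ℕ) = 2 ^ 2 := rfl
    _ ≤ 2 ^ k := Nat.pow_le_pow_right (by norm_num) hk
  rw [hc] at hord hN
  have hzk : ((2:ℤ)) ^ k = (c : ℤ) := by
    rw [← hc]; push_cast; ring
  simp only [hc, hzk]
  have hcard : Fintype.card (AdjoinRoot p) = c := by
    rw [Module.card_fintype (AdjoinRoot.powerBasis hpne).basis, ZMod.card, Fintype.card_fin,
      AdjoinRoot.powerBasis_dim, hdeg, hc]
  set α : AdjoinRoot p := AdjoinRoot.root p with hα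
  have hα0 : α ≠ 0 := by
    intro h
    have h1 := pow_orderOf_eq_one α
    rw [hord, h, zero_pow (by omega : c - 1 ≠ 0)] at h1
    exact zero_ne_one h1
  have hinj : Set.InjOn (fun i : ℕ => α ^ i) (Set.Iio (c - 1)) := by
    rw [← hord]; exact pow_injOn_Iio_orderOf
  have himage : (Finset.range (c-1)).image (fun i => α ^ i) = Finset.univ.erase 0 := by
    apply Finset.eq_of_subset_of_card_le
    · intro y hy
      obtain ⟨i, hi, rfl⟩ := Finset.mem_image.1 hy
      exact Finset.mem_erase.2 ⟨pow_ne_zero i hα0, Finset.mem_univ _⟩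
    · rw [Finset.card_image_of_injOn (by rw [Finset.coe_range]; exact hinj),
        Finset.card_range, Finset.card_erase_of_mem (Finset.mem_univ _), Finset.card_univ, hcard]
  have h2 : ∀ x : AdjoinRoot p, x + x = 0 := by
    intro x
    have h11 : (1 : AdjoinRoot p) + 1 = 0 := by
      have e1 : ((1 : ZMod 2) + 1 : ZMod 2) = 0 := by decide
      calc (1 : AdjoinRoot p) + 1 = algebraMap (ZMod 2) (AdjoinRoot p) (1 + 1) := by
            rw [map_add, map_one]
        _ = 0 := by rw [e1, map_zero]
    linear_combination x * h11
  -- transfer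
  have htrans : ∀ t, N t = (asF (AdjoinRoot p) t).card := by
    intro t
    rw [hN t]
    have hsup : ∀ q : (ZMod 2)[X], q.coeff 0 = 1 → q.natDegree ≤ c - 2 →
        ↑q.support ⊆ Set.Iio (c - 1) := by
      intro q h0 hdq i hi
      rw [Finset.mem_coe] at hi
      have h1 := Polynomial.le_natDegree_of_mem_supp i hi
      rw [Set.mem_Iio]
      omega
    have hinjΦ : Set.InjOn (fun q : (ZMod 2)[X] => q.support.image (fun i => α ^ i))
        {q : (ZMod 2)[X] | q.coeff 0 = 1 ∧ q.natDegree ≤ c - 2 ∧ q.support.card = t ∧ p ∣ q} := by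
      intro q1 h1 q2 h2 heq
      simp only at heq
      apply eq_of_support_eq
      have hs1 := hsup q1 h1.1 h1.2.1
      have hs2 := hsup q2 h2.1 h2.2.1
      ext i
      constructor
      · intro hi
        have hmem : α ^ i ∈ q2.support.image (fun i => α ^ i) := by
          rw [← heq]
          exact Finset.mem_image.2 ⟨i, hi, rfl⟩
        obtain ⟨j, hj, hji⟩ := Finset.mem_image.1 hmem
        exact hinj (hs2 hj) (hs1 hi) hji ▸ hj
      · intro hi
        have hmem : α ^ i ∈ q1.support.image (fun i => α ^ i) := by
          rw [heq]
          exact Finset.mem_image.2 ⟨i, hi, rfl⟩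
        obtain ⟨j, hj, hji⟩ := Finset.mem_image.1 hmem
        exact hinj (hs1 hj) (hs2 hi) hji ▸ hj
    have himgΦ : (fun q : (ZMod 2)[X] => q.support.image (fun i => α ^ i)) ''
        {q : (ZMod 2)[X] | q.coeff 0 = 1 ∧ q.natDegree ≤ c - 2 ∧ q.support.card = t ∧ p ∣ q}
        = ↑(asF (AdjoinRoot p) t) := by
      apply Set.Subset.antisymm
      · rintro _ ⟨q, hq, rfl⟩
        obtain ⟨h0, hdq, hcs, hdvd⟩ := hq
        have hs1 := hsup q h0 hdq
        rw [Finset.mem_coe, mem_asF]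
        refine ⟨?_, ?_, ?_, ?_⟩
        · have h0s : 0 ∈ q.support := Polynomial.mem_support_iff.2 (by
            rw [h0]; exact one_ne_zero)
          exact Finset.mem_image.2 ⟨0, h0s, pow_zero α⟩
        · intro h
          obtain ⟨i, hi, hpow⟩ := Finset.mem_image.1 h
          exact pow_ne_zero i hα0 hpow
        · rw [Finset.card_image_of_injOn (hinj.mono hs1)]
          exact hcs
        · have haev : Polynomial.aeval α q = 0 := by
            rw [hα, AdjoinRoot.aeval_eq, AdjoinRoot.mk_eq_zero]
            exact hdvd
          rw [aeval_eq_sum_support] at haev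
          rw [Finset.sum_image (fun i hi j hj hij => hinj (hs1 hi) (hs1 hj) hij)]
          exact haev
      · intro S hS
        rw [Finset.mem_coe, mem_asF] at hS
        obtain ⟨h1S, h0S, hcS, hsS⟩ := hS
        have hSsub : S ⊆ (Finset.range (c-1)).image (fun i => α ^ i) := by
          rw [himage]
          intro y hy
          refine Finset.mem_erase.2 ⟨?_, Finset.mem_univ _⟩
          rintro rfl
          exact h0S hy
        obtain ⟨T, hTsub, hTimg⟩ := Finset.subset_image_iff.1 hSsub
        have hqsupp : (∑ i ∈ T, (Polynomial.X : (ZMod 2)[X]) ^ i).support = T :=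
          support_sum_X_pow T
        have hTiio : ↑T ⊆ Set.Iio (c - 1) := by
          intro i hi
          rw [Finset.mem_coe] at hi
          have := Finset.mem_range.1 (hTsub hi)
          rw [Set.mem_Iio]
          omega
        have h0T : 0 ∈ T := by
          obtain ⟨i, hi, hpow⟩ := Finset.mem_image.1 (hTimg ▸ h1S)
          have hi0 : i = 0 := hinj (hTiio hi) (by rw [Set.mem_Iio]; omega)
            (by show α ^ i = α ^ 0; rw [hpow, pow_zero])
          exact hi0 ▸ hi
        have hTcard : T.card = t := by
          rw [← hcS, ← hTimg, Finset.card_image_of_injOn (hinj.mono hTiio)]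
        refine ⟨∑ i ∈ T, Polynomial.X ^ i, ⟨?_, ?_, ?_, ?_⟩, ?_⟩
        · apply coeff_one_of_mem
          rw [hqsupp]
          exact h0T
        · have hne : (∑ i ∈ T, (Polynomial.X : (ZMod 2)[X]) ^ i) ≠ 0 := by
            intro h
            rw [h, Polynomial.support_zero] at hqsupp
            rw [← hqsupp] at h0T
            exact Finset.notMem_empty 0 h0T
          have hmem := Polynomial.natDegree_mem_support_of_nonzero hne
          rw [hqsupp] at hmem
          have := Finset.mem_range.1 (hTsub hmem)
          omega
        · rw [hqsupp, hTcard]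
        · rw [← AdjoinRoot.mk_eq_zero, ← AdjoinRoot.aeval_eq, ← hα,
            aeval_eq_sum_support, hqsupp]
          have := Finset.sum_image (f := fun x : AdjoinRoot p => x)
            (g := fun i : ℕ => α ^ i) (s := T)
            (fun i hi j hj hij => hinj (hTiio hi) (hTiio hj) hij)
          rw [← this, hTimg]
          exact hsS
        · simp only
          rw [hqsupp, hTimg]
    calc ({q : (ZMod 2)[X] | q.coeff 0 = 1 ∧ q.natDegree ≤ c - 2 ∧
            q.support.card = t ∧ p ∣ q}).ncard
        = ((fun q : (ZMod 2)[X] => q.support.image (fun i => α ^ i)) ''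
            {q : (ZMod 2)[X] | q.coeff 0 = 1 ∧ q.natDegree ≤ c - 2 ∧
              q.support.card = t ∧ p ∣ q}).ncard := (Set.ncard_image_of_injOn hinjΦ).symm
      _ = (asF (AdjoinRoot p) t).card := by rw [himgΦ, Set.ncard_coe_finset]
  refine ⟨?_, ?_, ?_⟩
  · rw [htrans 1, Finset.card_eq_zero, Finset.eq_empty_iff_forall_notMem]
    intro S hS
    rw [mem_asF] at hS
    obtain ⟨h1, h0, hcard1, hsum⟩ := hS
    obtain ⟨x, hx⟩ := Finset.card_eq_one.1 hcard1
    rw [hx] at h1 hsum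
    rw [Finset.mem_singleton] at h1
    rw [Finset.sum_singleton, ← h1] at hsum
    exact one_ne_zero hsum
  · rw [htrans 2, Finset.card_eq_zero, Finset.eq_empty_iff_forall_notMem]
    intro S hS
    rw [mem_asF] at hS
    obtain ⟨h1, h0, hcard2, hsum⟩ := hS
    have hce : (S.erase 1).card = 1 := by rw [Finset.card_erase_of_mem h1, hcard2]
    obtain ⟨x, hx⟩ := Finset.card_eq_one.1 hce
    have hx1 : x ≠ 1 := by
      have hxe : x ∈ S.erase 1 := hx ▸ Finset.mem_singleton_self x
      exact (Finset.mem_erase.1 hxe).1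
    have hsum_er : ∑ y ∈ S.erase 1, y = 1 := by
      have h' := Finset.add_sum_erase S (fun x => x) h1
      rw [hsum] at h'
      exact (addeq h2 h').symm
    rw [hx, Finset.sum_singleton] at hsum_er
    exact hx1 hsum_er
  · intro t ht
    have hcore := core_id (F := AdjoinRoot p) h2 (t - 2)
    rw [hcard] at hcore
    have e1 : t - 2 + 1 = t - 1 := by omega
    have e2 : t - 2 + 2 = t := by omega
    rw [e1, e2, ← htrans (t-2), ← htrans (t-1), ← htrans t] at hcore
    have hae : ((c - 2 - (t - 2 - 1) : ℕ) : ℤ) * (N (t-2) : ℤ)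
        = ((c:ℤ) - t + 1) * (N (t-2) : ℤ) := by
      rcases le_or_gt t (c+1) with h | h
      · have he : ((c - 2 - (t - 2 - 1) : ℕ) : ℤ) = (c:ℤ) - t + 1 := by omega
        rw [he]
      · have hz : N (t-2) = 0 := by
          rw [htrans]
          exact asF_card_eq_zero (by rw [hcard]; omega)
        rw [hz]
        simp
    have ht2 : 2 ≤ t := by omega
    have ht1 : 1 ≤ t := by omega
    have hc1 : 1 ≤ c := by omega
    zify [ht2, ht1, hc1] at hcore
    linear_combination -hcore - ((t:ℤ) - 2) * hae
end
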